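/- arXiv:1406.6167 — 6 statements merged into one kernel-verified Lean document; each statement's English description precedes it below -/
import Mathlib

section
/- The digraph contains a spanning tree if and only if 0 is a simple eigenvalue of the Laplacian ℒ, i.e., 0 is a root of the characteristic polynomial of ℒ of algebraic multiplicity exactly 1 (moreover the all-ones vector 𝟏 is always a right eigenvector for 0, since ℒ𝟏 = 0). -/
open Matrix Polynomial

/-- A digraph given by adjacency matrix `Adj` (where `Adj i j = 1` means there is an
edge from `j` to `i`) contains a spanning tree: some root vertex reaches every
vertex along directed edges. -/
def ContainsSpanningTree {M : ℕ} (Adj : Matrix (Fin M) (Fin M) ℝ) : Prop :=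
  ∃ r : Fin M, ∀ i : Fin M, Relation.ReflTransGen (fun u v => Adj v u = 1) r i

namespace SpanTreeAux

/-- The Laplacian of an adjacency matrix. -/
def lap {n : ℕ} (A : Matrix (Fin n) (Fin n) ℝ) : Matrix (Fin n) (Fin n) ℝ :=
  Matrix.diagonal (fun i => ∑ j, A i j) - A

lemma lap_mulVec {n : ℕ} (A : Matrix (Fin n) (Fin n) ℝ) (y : Fin n → ℝ) (i : Fin n) :
    (lap A *ᵥ y) i = (∑ j, A i j) * y i - ∑ j, A i j * y j := by
  simp only [lap, mulVec, dotProduct, Matrix.sub_apply, sub_mul, Finset.sum_sub_distrib]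
  congr 1
  rw [Finset.sum_eq_single i] <;> simp +contextual [Matrix.diagonal_apply_ne']

lemma lap_apply_ne {n : ℕ} (A : Matrix (Fin n) (Fin n) ℝ) {i j : Fin n} (h : i ≠ j) :
    lap A i j = -A i j := by
  simp [lap, Matrix.diagonal_apply_ne _ h]

/-- Key kernel lemma: a vector vanishing at `r` and satisfying the Laplacian-type
equations at all other vertices must vanish, provided `t > 0` or `r` reaches everyone. -/
lemma kernel_lemma {m : ℕ} (A : Matrix (Fin (m+1)) (Fin (m+1)) ℝ)
    (h01 : ∀ i j, A i j = 0 ∨ A i j = 1) (r : Fin (m+1)) (t : ℝ) (ht : 0 ≤ t)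
    (hre : t = 0 → ∀ i, Relation.ReflTransGen (fun u v => A v u = 1) r i)
    (y : Fin (m+1) → ℝ) (hyr : y r = 0)
    (hy : ∀ i, i ≠ r → ((∑ j, A i j) + t) * y i = ∑ j, A i j * y j) :
    y = 0 := by
  have hA : ∀ i j, 0 ≤ A i j := by
    intro i j; rcases h01 i j with h | h <;> rw [h] <;> norm_num
  by_contra hy0
  obtain ⟨i1, hi1⟩ : ∃ i, y i ≠ 0 := by
    by_contra h; push_neg at h; exact hy0 (funext fun i => h i)
  obtain ⟨i0, -, hmax⟩ := Finset.exists_max_image Finset.univ (fun i => |y i|)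
    ⟨i1, Finset.mem_univ _⟩
  have hmax' : ∀ i, |y i| ≤ |y i0| := fun i => hmax i (Finset.mem_univ i)
  set m0 := |y i0| with hm0def
  have hm0 : 0 < m0 := lt_of_lt_of_le (abs_pos.2 hi1) (hmax' i1)
  have hi0r : i0 ≠ r := by
    intro h; rw [h, hyr] at hm0def; simp [hm0def] at hm0
  have key : ∀ i, i ≠ r → |y i| = m0 → t = 0 ∧ ∀ j, A i j = 1 → j ≠ r ∧ |y j| = m0 := by
    intro i hir him
    set d := ∑ j, A i j with hd
    have hd0 : 0 ≤ d := Finset.sum_nonneg fun j _ => hA i j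
    have h2 : |∑ j, A i j * y j| ≤ ∑ j, A i j * |y j| := by
      refine (Finset.abs_sum_le_sum_abs _ _).trans (le_of_eq ?_)
      exact Finset.sum_congr rfl fun j _ => by rw [abs_mul, abs_of_nonneg (hA i j)]
    have h3 : ∑ j, A i j * |y j| ≤ d * m0 := by
      rw [hd, Finset.sum_mul]
      exact Finset.sum_le_sum fun j _ => mul_le_mul_of_nonneg_left (hmax' j) (hA i j)
    have h1 : (d + t) * m0 = |∑ j, A i j * y j| := by
      rw [← hy i hir, abs_mul, abs_of_nonneg (by linarith), him]
    have htm : t * m0 ≤ 0 := by nlinarith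
    have ht0 : t = 0 := by nlinarith
    refine ⟨ht0, ?_⟩
    have hsum0 : ∑ j, A i j * (m0 - |y j|) = 0 := by
      have hexp : ∑ j, A i j * (m0 - |y j|) = d * m0 - ∑ j, A i j * |y j| := by
        simp only [mul_sub, Finset.sum_sub_distrib, hd, Finset.sum_mul]
      rw [hexp]
      have : d * m0 ≤ ∑ j, A i j * |y j| := by
        rw [ht0] at h1; nlinarith [h1, h2]
      linarith
    have hterm := (Finset.sum_eq_zero_iff_of_nonneg (fun j _ =>
      mul_nonneg (hA i j) (by linarith [hmax' j]))).1 hsum0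
    intro j hj
    have hyj : |y j| = m0 := by
      have := hterm j (Finset.mem_univ j)
      rw [hj, one_mul] at this; linarith
    refine ⟨?_, hyj⟩
    intro hjr; rw [hjr, hyr] at hyj; simp at hyj; exact absurd hyj.symm (ne_of_gt hm0)
  have ht0 : t = 0 := (key i0 hi0r rfl).1
  have reach := hre ht0
  have main : ∀ i, Relation.ReflTransGen (fun u v => A v u = 1) r i → i = r ∨ |y i| ≠ m0 := by
    intro i h
    induction h with
    | refl => exact Or.inl rfl
    | @tail b c hb hbc ih =>
      by_cases hcr : c = r
      · exact Or.inl hcr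
      · right
        intro hcm
        obtain ⟨hbr, hbm⟩ := (key c hcr hcm).2 b hbc
        rcases ih with h | h
        · exact hbr h
        · exact h hbm
  rcases main i0 (reach i0) with h | h
  · exact hi0r h
  · exact h rfl

lemma eval_neg_charpoly {k : ℕ} (B : Matrix (Fin k) (Fin k) ℝ) (t : ℝ) :
    (-B).charpoly.eval t = (t • (1 : Matrix (Fin k) (Fin k) ℝ) + B).det := by
  rw [Matrix.charpoly]
  have h := RingHom.map_det (Polynomial.evalRingHom t) (charmatrix (-B))
  simp only [Polynomial.coe_evalRingHom] at h
  rw [h]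
  congr 1
  ext i j
  by_cases hij : i = j
  · subst hij
    simp [charmatrix_apply_eq, Matrix.one_apply_eq]
  · simp [charmatrix_apply_ne _ _ _ hij, Matrix.one_apply_ne hij]

lemma det_smul_one_add_sub_ne_zero {m : ℕ} (A : Matrix (Fin (m+1)) (Fin (m+1)) ℝ)
    (h01 : ∀ i j, A i j = 0 ∨ A i j = 1) (r : Fin (m+1)) (t : ℝ) (ht : 0 ≤ t)
    (hre : t = 0 → ∀ i, Relation.ReflTransGen (fun u v => A v u = 1) r i) :
    (t • (1 : Matrix (Fin m) (Fin m) ℝ) + (lap A).submatrix r.succAbove r.succAbove).det ≠ 0 := by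
  intro hdet
  obtain ⟨v, hv0, hv⟩ := (Matrix.exists_mulVec_eq_zero_iff).2 hdet
  set y : Fin (m+1) → ℝ := r.insertNth 0 v with hydef
  have hyr : y r = 0 := by rw [hydef, Fin.insertNth_apply_same]
  have hysA : ∀ k, y (r.succAbove k) = v k := by
    intro k; rw [hydef, Fin.insertNth_apply_succAbove]
  have hy : ∀ i, i ≠ r → ((∑ j, A i j) + t) * y i = ∑ j, A i j * y j := by
    intro i hir
    obtain ⟨k, hk⟩ := Fin.exists_succAbove_eq (show i ≠ r from hir)
    have h0 := congrFun hv k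
    rw [Pi.zero_apply, add_mulVec, smul_mulVec, one_mulVec, Pi.add_apply,
      Pi.smul_apply] at h0
    have hLs : (((lap A).submatrix r.succAbove r.succAbove) *ᵥ v) k = (lap A *ᵥ y) i := by
      subst hk
      have : (lap A *ᵥ y) (r.succAbove k) = ∑ j', lap A (r.succAbove k) j' * y j' := rfl
      rw [this, Fin.sum_univ_succAbove (fun j' => lap A (r.succAbove k) j' * y j') r,
        hyr, mul_zero, zero_add]
      simp only [mulVec, dotProduct, submatrix_apply, hysA]
    rw [hLs, lap_mulVec] at h0
    have hyi : y i = v k := by rw [← hk, hysA]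
    rw [hyi] at h0 ⊢
    rw [smul_eq_mul] at h0
    ring_nf at h0 ⊢
    linarith
  have hzero := kernel_lemma A h01 r t ht hre y hyr hy
  apply hv0
  funext k
  have := congrFun hzero (r.succAbove k)
  rw [hysA] at this
  exact this

lemma det_sub_nonneg_pos {m : ℕ} (A : Matrix (Fin (m+1)) (Fin (m+1)) ℝ)
    (h01 : ∀ i j, A i j = 0 ∨ A i j = 1) (r : Fin (m+1)) :
    0 ≤ ((lap A).submatrix r.succAbove r.succAbove).det ∧
    ((∀ i, Relation.ReflTransGen (fun u v => A v u = 1) r i) →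
      0 < ((lap A).submatrix r.succAbove r.succAbove).det) := by
  set B := (lap A).submatrix r.succAbove r.succAbove with hB
  set p := (-B).charpoly with hp
  have heval : ∀ t, p.eval t = (t • 1 + B).det := fun t => eval_neg_charpoly B t
  have hzero_eval : p.eval 0 = B.det := by rw [heval]; rw [zero_smul, zero_add]
  have hnzpos : ∀ t : ℝ, 0 < t → p.eval t ≠ 0 := by
    intro t htpos
    rw [heval]
    exact det_smul_one_add_sub_ne_zero A h01 r t htpos.le (fun h => absurd h (ne_of_gt htpos))
  have h0le : 0 ≤ p.eval 0 := by
    rcases Nat.eq_zero_or_pos m with hm | hm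
    · subst hm
      rw [hzero_eval, Matrix.det_fin_zero]
      norm_num
    · by_contra hneg
      push_neg at hneg
      have hmonic : p.Monic := (-B).charpoly_monic
      have hdeg : 0 < p.degree := by
        rw [hp, Matrix.charpoly_degree_eq_dim, Fintype.card_fin]
        exact_mod_cast hm
      have htend := Polynomial.tendsto_atTop_of_leadingCoeff_nonneg p hdeg
        (by rw [hmonic.leadingCoeff]; norm_num)
      obtain ⟨T, hT1, hT0⟩ :=
        ((htend.eventually_ge_atTop 1).and (Filter.eventually_ge_atTop (0:ℝ))).exists
      have hIcc := intermediate_value_Icc hT0 p.continuous.continuousOn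
      have hmem : (0:ℝ) ∈ Set.Icc (p.eval 0) (p.eval T) := ⟨hneg.le, by linarith⟩
      obtain ⟨c, hcmem, hceval⟩ := hIcc hmem
      have hc0 : c ≠ 0 := by
        intro h
        rw [h] at hceval
        simp only at hceval
        linarith
      exact hnzpos c (lt_of_le_of_ne hcmem.1 (Ne.symm hc0)) hceval
  constructor
  · rw [← hzero_eval]; exact h0le
  · intro hreach
    have hne : B.det ≠ 0 := by
      have := det_smul_one_add_sub_ne_zero A h01 r 0 le_rfl (fun _ => hreach)
      rwa [zero_smul, zero_add] at this
    rw [← hzero_eval] at hne ⊢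
    exact lt_of_le_of_ne h0le (Ne.symm hne)

lemma det_sub_eq_zero {m : ℕ} (A : Matrix (Fin (m+1)) (Fin (m+1)) ℝ)
    (h01 : ∀ i j, A i j = 0 ∨ A i j = 1) (r : Fin (m+1))
    (hnr : ¬ ∀ i, Relation.ReflTransGen (fun u v => A v u = 1) r i) :
    ((lap A).submatrix r.succAbove r.succAbove).det = 0 := by
  classical
  set P : Fin (m+1) → Prop := fun i => ¬ Relation.ReflTransGen (fun u v => A v u = 1) r i
    with hPdef
  push_neg at hnr
  obtain ⟨i1, hi1⟩ := hnr
  have hi1' : P i1 := hi1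
  have hPr : ¬ P r := by
    rw [hPdef]
    simp only [not_not]
    exact Relation.ReflTransGen.refl
  have hclosed : ∀ u j, P u → A u j ≠ 0 → P j := by
    intro u j hu hAuj hrj
    refine hu (Relation.ReflTransGen.tail hrj ?_)
    rcases h01 u j with h | h
    · exact absurd h hAuj
    · exact h
  have hmemfilter : ∀ x, x ∈ Finset.univ.filter P ↔ P x := by
    intro x; simp
  -- the principal block on the non-reachable set is singular
  have rowsum : ∀ u : Subtype P, ∑ v : Subtype P, lap A u.1 v.1 = 0 := by
    intro u
    have h1 : ∑ v : Subtype P, lap A u.1 v.1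
        = ∑ j ∈ Finset.univ.filter P, lap A u.1 j :=
      (Finset.sum_subtype (Finset.univ.filter P) hmemfilter (fun j => lap A u.1 j)).symm
    have h2 : ∑ j ∈ Finset.univ.filter P, lap A u.1 j = ∑ j, lap A u.1 j := by
      refine Finset.sum_subset (Finset.filter_subset _ _) ?_
      intro j _ hj
      rw [hmemfilter] at hj
      have hne : u.1 ≠ j := fun h => hj (h ▸ u.2)
      rw [lap_apply_ne A hne]
      rcases h01 u.1 j with h | h
      · rw [h, neg_zero]
      · exact absurd (hclosed u.1 j u.2 (by rw [h]; norm_num)) hj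
    have h3 : ∑ j, lap A u.1 j = 0 := by
      simp only [lap, Matrix.sub_apply, Finset.sum_sub_distrib, Matrix.diagonal_apply]
      rw [Finset.sum_ite_eq Finset.univ u.1 (fun _ => ∑ j, A u.1 j)]
      simp
    rw [h1, h2, h3]
  have hdetU : (Matrix.of fun u v : Subtype P => lap A u.1 v.1).det = 0 := by
    rw [← Matrix.exists_mulVec_eq_zero_iff]
    refine ⟨fun _ => 1, ?_, ?_⟩
    · intro h
      have := congrFun h ⟨i1, hi1'⟩
      norm_num at this
    · funext u
      simp only [mulVec, dotProduct, Matrix.of_apply, mul_one, Pi.zero_apply]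
      exact rowsum u
  obtain ⟨w, hw0, hw⟩ := Matrix.exists_vecMul_eq_zero_iff.2 hdetU
  rw [← Matrix.exists_vecMul_eq_zero_iff]
  set w' : Fin m → ℝ := fun k => if h : P (r.succAbove k) then w ⟨r.succAbove k, h⟩ else 0
    with hw'def
  refine ⟨w', ?_, ?_⟩
  · obtain ⟨u0, hu0⟩ : ∃ u0, w u0 ≠ 0 := Function.ne_iff.1 hw0
    have hu0r : u0.1 ≠ r := fun h => hPr (h ▸ u0.2)
    obtain ⟨k0, hk0⟩ := Fin.exists_succAbove_eq hu0r
    intro hzero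
    apply hu0
    have h := congrFun hzero k0
    rw [hw'def] at h
    simp only [Pi.zero_apply] at h
    rw [dif_pos (show P (r.succAbove k0) by rw [hk0]; exact u0.2)] at h
    rwa [show (⟨r.succAbove k0, by rw [hk0]; exact u0.2⟩ : Subtype P) = u0
      from Subtype.ext hk0] at h
  · funext j
    have hvm : (w' ᵥ* ((lap A).submatrix r.succAbove r.succAbove)) j
        = ∑ k, w' k * lap A (r.succAbove k) (r.succAbove j) := by
      simp [vecMul, dotProduct, submatrix_apply]
    rw [hvm, Pi.zero_apply]
    set g : Fin (m+1) → ℝ :=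
      fun i => (if h : P i then w ⟨i, h⟩ else 0) * lap A i (r.succAbove j) with hgdef
    have hg : ∑ k, w' k * lap A (r.succAbove k) (r.succAbove j) = ∑ k, g (r.succAbove k) := rfl
    have hsplit := Fin.sum_univ_succAbove g r
    have hgr : g r = 0 := by rw [hgdef]; simp [dif_neg hPr]
    have hgsum : ∑ i, g i = ∑ u : Subtype P, w u * lap A u.1 (r.succAbove j) := by
      have e1 : ∑ i, g i = ∑ i ∈ Finset.univ.filter P, g i := by
        symm
        refine Finset.sum_subset (Finset.filter_subset _ _) ?_
        intro i _ hi
        rw [hmemfilter] at hi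
        rw [hgdef]; simp [dif_neg hi]
      have e2 : ∑ i ∈ Finset.univ.filter P, g i = ∑ u : Subtype P, g u.1 :=
        Finset.sum_subtype _ hmemfilter g
      rw [e1, e2]
      refine Finset.sum_congr rfl fun u _ => ?_
      rw [hgdef]; simp [dif_pos u.2]
    rw [hg]
    have hstep : ∑ k, g (r.succAbove k) = ∑ i, g i := by rw [hsplit, hgr, zero_add]
    rw [hstep, hgsum]
    by_cases hPj : P (r.succAbove j)
    · have := congrFun hw ⟨r.succAbove j, hPj⟩
      simpa [vecMul, dotProduct] using this
    · refine Finset.sum_eq_zero fun u _ => ?_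
      have hne : u.1 ≠ r.succAbove j := fun h => hPj (h ▸ u.2)
      rw [lap_apply_ne A hne]
      rcases h01 u.1 (r.succAbove j) with h | h
      · rw [h]; ring
      · exact absurd (hclosed _ _ u.2 (by rw [h]; norm_num)) hPj

lemma coeff_one_mul (p q : ℝ[X]) :
    (p * q).coeff 1 = p.coeff 0 * q.coeff 1 + p.coeff 1 * q.coeff 0 := by
  rw [Polynomial.coeff_mul, Finset.Nat.sum_antidiagonal_eq_sum_range_succ_mk]
  simp [Finset.sum_range_succ]

lemma coeff_one_prod {ι : Type*} [DecidableEq ι] (s : Finset ι) (f : ι → ℝ[X]) :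
    (∏ i ∈ s, f i).coeff 1
      = ∑ i ∈ s, (f i).coeff 1 * ∏ j ∈ s.erase i, (f j).coeff 0 := by
  induction s using Finset.induction_on with
  | empty => simp [Polynomial.coeff_one]
  | @insert a s ha ih =>
    rw [Finset.prod_insert ha, coeff_one_mul, ih, Polynomial.coeff_zero_prod,
      Finset.sum_insert ha, Finset.erase_insert ha, Finset.mul_sum]
    have hcong : ∀ i ∈ s, (f i).coeff 1 * ∏ j ∈ (insert a s).erase i, (f j).coeff 0
        = (f a).coeff 0 * ((f i).coeff 1 * ∏ j ∈ s.erase i, (f j).coeff 0) := by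
      intro i hi
      have hia : i ≠ a := fun h => ha (h ▸ hi)
      rw [Finset.erase_insert_of_ne hia.symm,
        Finset.prod_insert (fun h => ha (Finset.mem_of_mem_erase h))]
      ring
    rw [Finset.sum_congr rfl hcong]
    ring

lemma charpoly_coeff_one {k : ℕ} (B : Matrix (Fin (k+1)) (Fin (k+1)) ℝ) :
    B.charpoly.coeff 1
      = ∑ r : Fin (k+1), ((-B).submatrix r.succAbove r.succAbove).det := by
  classical
  have hc1 : ∀ (a b : Fin (k+1)), (charmatrix B a b).coeff 1 = if a = b then 1 else 0 := by
    intro a b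
    by_cases h : a = b
    · subst h; rw [charmatrix_apply_eq]; simp
    · rw [charmatrix_apply_ne _ _ _ h]; simp [h]
  have hc0 : ∀ (a b : Fin (k+1)), (charmatrix B a b).coeff 0 = (-B) a b := by
    intro a b
    by_cases h : a = b
    · subst h; rw [charmatrix_apply_eq]; simp
    · rw [charmatrix_apply_ne _ _ _ h]; simp
  have step1 : B.charpoly.coeff 1
      = ∑ σ : Equiv.Perm (Fin (k+1)), ((Equiv.Perm.sign σ : ℤ) : ℝ) *
          ∑ i, (if σ i = i then 1 else 0) * ∏ j ∈ Finset.univ.erase i, (-B) (σ j) j := by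
    rw [Matrix.charpoly, Matrix.det_apply', Polynomial.finset_sum_coeff]
    refine Finset.sum_congr rfl fun σ _ => ?_
    rw [Polynomial.coeff_intCast_mul, coeff_one_prod]
    congr 1
    refine Finset.sum_congr rfl fun i _ => ?_
    rw [hc1]
    congr 1
    exact Finset.prod_congr rfl fun j _ => hc0 _ _
  rw [step1]
  have step2 : ∀ r : Fin (k+1),
      (∑ σ : Equiv.Perm (Fin (k+1)), ((Equiv.Perm.sign σ : ℤ) : ℝ) *
        ((if σ r = r then 1 else 0) * ∏ j ∈ Finset.univ.erase r, (-B) (σ j) j))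
      = ((-B).updateCol r (Pi.single r 1)).det := by
    intro r
    rw [Matrix.det_apply']
    refine Finset.sum_congr rfl fun σ _ => ?_
    congr 1
    rw [← Finset.mul_prod_erase Finset.univ _ (Finset.mem_univ r)]
    congr 1
    · rw [Matrix.updateCol_apply, if_pos rfl, Pi.single_apply]
    · refine Finset.prod_congr rfl fun j hj => ?_
      rw [Matrix.updateCol_apply, if_neg (Finset.ne_of_mem_erase hj)]
  have step3 : ∀ r : Fin (k+1),
      ((-B).updateCol r (Pi.single r 1)).det
        = ((-B).submatrix r.succAbove r.succAbove).det := by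
    intro r
    rw [Matrix.det_succ_column _ r]
    rw [Finset.sum_eq_single r]
    · rw [Matrix.updateCol_apply, if_pos rfl, Pi.single_apply, if_pos rfl]
      have he : ((-1 : ℝ)) ^ ((r : ℕ) + (r : ℕ)) = 1 := Even.neg_one_pow ⟨(r:ℕ), rfl⟩
      rw [he, one_mul, one_mul]
      congr 1
      ext a b
      rw [Matrix.submatrix_apply, Matrix.submatrix_apply, Matrix.updateCol_apply,
        if_neg (Fin.succAbove_ne r b)]
    · intro a _ har
      rw [Matrix.updateCol_apply, if_pos rfl, Pi.single_apply, if_neg har]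
      ring
    · intro h
      exact absurd (Finset.mem_univ r) h
  calc ∑ σ : Equiv.Perm (Fin (k+1)), ((Equiv.Perm.sign σ : ℤ) : ℝ) *
          ∑ i, (if σ i = i then 1 else 0) * ∏ j ∈ Finset.univ.erase i, (-B) (σ j) j
      = ∑ σ : Equiv.Perm (Fin (k+1)), ∑ i, ((Equiv.Perm.sign σ : ℤ) : ℝ) *
          ((if σ i = i then 1 else 0) * ∏ j ∈ Finset.univ.erase i, (-B) (σ j) j) := by
        exact Finset.sum_congr rfl fun σ _ => Finset.mul_sum _ _ _
    _ = ∑ i : Fin (k+1), ∑ σ : Equiv.Perm (Fin (k+1)), ((Equiv.Perm.sign σ : ℤ) : ℝ) *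
          ((if σ i = i then 1 else 0) * ∏ j ∈ Finset.univ.erase i, (-B) (σ j) j) :=
        Finset.sum_comm
    _ = ∑ r : Fin (k+1), ((-B).submatrix r.succAbove r.succAbove).det := by
        exact Finset.sum_congr rfl fun r _ => by rw [step2 r, step3 r]

end SpanTreeAux

theorem stmt0 (M : ℕ) (hM : 0 < M)
    (Adj : Matrix (Fin M) (Fin M) ℝ)
    (hA01 : ∀ i j, Adj i j = 0 ∨ Adj i j = 1)
    (hdiag : ∀ i, Adj i i = 0)
    (L : Matrix (Fin M) (Fin M) ℝ)
    (hL : L = Matrix.diagonal (fun i => ∑ j, Adj i j) - Adj) :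
    (ContainsSpanningTree Adj ↔ Polynomial.rootMultiplicity 0 L.charpoly = 1) ∧
      L *ᵥ (fun _ => (1 : ℝ)) = 0 := by
  obtain ⟨m, rfl⟩ : ∃ m, M = m + 1 := ⟨M - 1, by omega⟩
  have hLone : L *ᵥ (fun _ => (1 : ℝ)) = 0 := by
    funext i
    rw [hL]
    simp [sub_mulVec, mulVec_diagonal, mulVec, dotProduct, Matrix.sub_apply,
      Matrix.diagonal_apply, Finset.sum_ite_eq]
  refine ⟨?_, hLone⟩
  have hLlap : L = SpanTreeAux.lap Adj := by rw [hL, SpanTreeAux.lap]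
  have hdetL : L.det = 0 := by
    rw [← Matrix.exists_mulVec_eq_zero_iff]
    refine ⟨fun _ => 1, ?_, hLone⟩
    intro h
    have := congrFun h 0
    norm_num at this
  have hp0 : L.charpoly ≠ 0 := L.charpoly_monic.ne_zero
  have hc0 : L.charpoly.coeff 0 = 0 := by
    have h := Matrix.det_eq_sign_charpoly_coeff L
    rw [hdetL] at h
    have hne : ((-1:ℝ))^(Fintype.card (Fin (m+1))) ≠ 0 := by
      apply pow_ne_zero; norm_num
    exact ((mul_eq_zero.1 h.symm).resolve_left hne)
  have hcoeff1 : L.charpoly.coeff 1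
      = ∑ r : Fin (m+1), ((-L).submatrix r.succAbove r.succAbove).det :=
    SpanTreeAux.charpoly_coeff_one L
  have hnegsub : ∀ r : Fin (m+1), ((-L).submatrix r.succAbove r.succAbove).det
      = (-1:ℝ)^m * ((L).submatrix r.succAbove r.succAbove).det := by
    intro r
    have h : ((-L).submatrix r.succAbove r.succAbove)
        = -((L).submatrix r.succAbove r.succAbove) := by
      ext a b; simp
    rw [h, Matrix.det_neg, Fintype.card_fin]
  have hsum : L.charpoly.coeff 1
      = (-1:ℝ)^m * ∑ r : Fin (m+1), (L.submatrix r.succAbove r.succAbove).det := by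
    rw [hcoeff1, Finset.mul_sum]
    exact Finset.sum_congr rfl fun r _ => hnegsub r
  have hcoeff1_ne_iff : L.charpoly.coeff 1 ≠ 0 ↔
      (∑ r : Fin (m+1), (L.submatrix r.succAbove r.succAbove).det) ≠ 0 := by
    rw [hsum]
    simp [mul_ne_zero_iff, pow_ne_zero]
  have hmult : Polynomial.rootMultiplicity 0 L.charpoly = 1 ↔ L.charpoly.coeff 1 ≠ 0 := by
    constructor
    · intro h1 hc1
      have hdvd : (X : ℝ[X])^2 ∣ L.charpoly := by
        rw [Polynomial.X_pow_dvd_iff]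
        intro d hd
        interval_cases d
        · exact hc0
        · exact hc1
      have h2 : 2 ≤ rootMultiplicity 0 L.charpoly := by
        rw [Polynomial.le_rootMultiplicity_iff hp0]
        simpa using hdvd
      omega
    · intro hc1
      have hge : 1 ≤ rootMultiplicity 0 L.charpoly := by
        rw [Polynomial.le_rootMultiplicity_iff hp0]
        have h : (X : ℝ[X])^1 ∣ L.charpoly := by
          rw [Polynomial.X_pow_dvd_iff]
          intro d hd
          interval_cases d
          exact hc0
        simpa using h
      have hle : rootMultiplicity 0 L.charpoly ≤ 1 := by
        rw [Polynomial.rootMultiplicity_le_iff hp0]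
        intro hdvd
        apply hc1
        have h : (X : ℝ[X])^2 ∣ L.charpoly := by simpa using hdvd
        exact Polynomial.X_pow_dvd_iff.1 h 1 (by norm_num)
      omega
  rw [hmult, hcoeff1_ne_iff, ContainsSpanningTree]
  constructor
  · rintro ⟨r, hr⟩
    have hpos := (SpanTreeAux.det_sub_nonneg_pos Adj hA01 r).2 hr
    have hnn : ∀ i : Fin (m+1),
        0 ≤ ((SpanTreeAux.lap Adj).submatrix i.succAbove i.succAbove).det :=
      fun i => (SpanTreeAux.det_sub_nonneg_pos Adj hA01 i).1
    rw [hLlap]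
    intro hzero
    have hge := Finset.single_le_sum (f := fun i : Fin (m+1) =>
      ((SpanTreeAux.lap Adj).submatrix i.succAbove i.succAbove).det)
      (fun i _ => hnn i) (Finset.mem_univ r)
    rw [hzero] at hge
    linarith
  · intro hne
    obtain ⟨r, hr⟩ : ∃ r : Fin (m+1), (L.submatrix r.succAbove r.succAbove).det ≠ 0 := by
      by_contra h
      push_neg at h
      exact hne (Finset.sum_eq_zero fun r _ => h r)
    refine ⟨r, ?_⟩
    by_contra hnr
    push_neg at hnr
    obtain ⟨i, hi⟩ := hnr
    exact hr (by
      rw [hLlap]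
      exact SpanTreeAux.det_sub_eq_zero Adj hA01 r (fun hall => hi (hall i)))
end

section
/- Fix weights a_1,…,a_M ∈ {0,1} with d = Σ_{j=1}^M a_j ≥ 1, target vectors x_1,…,x_M ∈ ℝⁿ, and an initial state x₀ ∈ ℝⁿ. Consider minimizing, over control sequences û(0),…,û(N−1) ∈ ℝᵐ with predicted states x̂(n+1) = A x̂(n) + B û(n) and x̂(0) = x₀, the cost J = Σ_{n=0}^{N−1} ( û(n)ᵀRû(n) + Σ_{j=1}^M a_j (x̂(n) − x_j)ᵀQ(x̂(n) − x_j) ) + Σ_{j=1}^M a_j (x̂(N) − x_j)ᵀQ_N(x̂(N) − x_j). Then J has a unique global minimizer, given in feedback form by û*(n) = Σ_{j=1}^M a_j [K(n) x̂*(n) + G(n) x_j] for n = 0,…,N−1, where K(n) = −R⁻¹Bᵀ(I + d·P(n+1)BR⁻¹Bᵀ)⁻¹P(n+1)A and G(n) = −R⁻¹Bᵀ(I + d·P(n+1)BR⁻¹Bᵀ)⁻¹Δ(n+1), and P, Δ are the backward matrix recursions P(n) = Aᵀ(I + d·P(n+1)BR⁻¹Bᵀ)⁻¹P(n+1)A +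 Q with P(N) = Q_N, and Δ(n) = Aᵀ(I + d·P(n+1)BR⁻¹Bᵀ)⁻¹Δ(n+1) − Q with Δ(N) = −Q_N. -/
open Matrix Polynomial

/-- Predicted state trajectory: `x̂(0) = x₀`, `x̂(k+1) = A x̂(k) + B û(k)`. -/
noncomputable def stateTraj {n m : ℕ} (A : Matrix (Fin n) (Fin n) ℝ)
    (B : Matrix (Fin n) (Fin m) ℝ) (x0 : Fin n → ℝ) (U : ℕ → Fin m → ℝ) : ℕ → Fin n → ℝ
  | 0 => x0
  | k + 1 => A *ᵥ stateTraj A B x0 U k + B *ᵥ U k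

/-- Extension of a finite control sequence by zero. -/
def extCtrl {m N : ℕ} (U : Fin N → Fin m → ℝ) : ℕ → Fin m → ℝ :=
  fun k => if h : k < N then U ⟨k, h⟩ else 0

/-- The finite-horizon cost
`J = Σ_{n=0}^{N−1} ( û(n)ᵀRû(n) + Σ_j a_j (x̂(n) − x_j)ᵀQ(x̂(n) − x_j) )
      + Σ_j a_j (x̂(N) − x_j)ᵀQ_N(x̂(N) − x_j)`. -/
noncomputable def rhcCost {n m M N : ℕ} (A : Matrix (Fin n) (Fin n) ℝ)
    (B : Matrix (Fin n) (Fin m) ℝ) (Q QN : Matrix (Fin n) (Fin n) ℝ)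
    (R : Matrix (Fin m) (Fin m) ℝ) (a : Fin M → ℝ) (x : Fin M → Fin n → ℝ)
    (x0 : Fin n → ℝ) (U : Fin N → Fin m → ℝ) : ℝ :=
  (∑ k : Fin N,
      ((U k) ⬝ᵥ (R *ᵥ U k) +
        ∑ j, a j *
          ((stateTraj A B x0 (extCtrl U) k - x j) ⬝ᵥ
            (Q *ᵥ (stateTraj A B x0 (extCtrl U) k - x j))))) +
    ∑ j, a j *
      ((stateTraj A B x0 (extCtrl U) N - x j) ⬝ᵥ
        (QN *ᵥ (stateTraj A B x0 (extCtrl U) N - x j)))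

variable {n m : ℕ}

lemma dp_comm (X : Matrix (Fin n) (Fin m) ℝ) (x : Fin n → ℝ) (y : Fin m → ℝ) :
    x ⬝ᵥ (X *ᵥ y) = y ⬝ᵥ (Xᵀ *ᵥ x) := by
  rw [dotProduct_mulVec, ← mulVec_transpose, dotProduct_comm]

lemma posdef_real_iff (X : Matrix (Fin n) (Fin n) ℝ) :
    X.PosDef ↔ X.IsHermitian ∧ ∀ v : Fin n → ℝ, v ≠ 0 → 0 < v ⬝ᵥ (X *ᵥ v) := by
  constructor
  · intro h; obtain ⟨h1, h2⟩ := posDef_iff_dotProduct_mulVec.mp h; exact ⟨h1, fun v hv => by simpa using h2 hv⟩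
  · rintro ⟨h1, h2⟩; exact posDef_iff_dotProduct_mulVec.mpr ⟨h1, fun v hv => by simpa using h2 v hv⟩

lemma possemidef_real_iff (X : Matrix (Fin n) (Fin n) ℝ) :
    X.PosSemidef ↔ X.IsHermitian ∧ ∀ v : Fin n → ℝ, 0 ≤ v ⬝ᵥ (X *ᵥ v) := by
  constructor
  · intro h; obtain ⟨h1, h2⟩ := posSemidef_iff_dotProduct_mulVec.mp h; exact ⟨h1, fun v => by simpa using h2 v⟩
  · rintro ⟨h1, h2⟩; exact posSemidef_iff_dotProduct_mulVec.mpr ⟨h1, fun v => by simpa using h2 v⟩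

lemma herm_real (X : Matrix (Fin n) (Fin n) ℝ) : X.IsHermitian ↔ Xᵀ = X := by
  rw [Matrix.IsHermitian, conjTranspose_eq_transpose_of_trivial]

lemma smul_posSemidef {X : Matrix (Fin n) (Fin n) ℝ} (hX : X.PosSemidef) {c : ℝ}
    (hc : 0 ≤ c) : (c • X).PosSemidef := by
  rw [possemidef_real_iff] at hX ⊢
  refine ⟨?_, fun v => ?_⟩
  · rw [herm_real] at hX ⊢; rw [transpose_smul, hX.1]
  · rw [smul_mulVec, dotProduct_smul, smul_eq_mul]
    exact mul_nonneg hc (hX.2 v)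

lemma conj_psd (X : Matrix (Fin n) (Fin n) ℝ) (hX : X.PosSemidef)
    (C : Matrix (Fin n) (Fin m) ℝ) : (Cᵀ * X * C).PosSemidef := by
  have := hX.conjTranspose_mul_mul_same C
  simpa using this

lemma S_psd {R : Matrix (Fin m) (Fin m) ℝ} (hR : R.PosDef)
    (B : Matrix (Fin n) (Fin m) ℝ) : (B * R⁻¹ * Bᵀ).PosSemidef := by
  have h := (hR.inv.posSemidef).mul_mul_conjTranspose_same B
  simpa using h

section key
variable {d : ℝ} {B : Matrix (Fin n) (Fin m) ℝ} {R : Matrix (Fin m) (Fin m) ℝ}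
  {P' : Matrix (Fin n) (Fin n) ℝ}

lemma Mk_eq (hP' : IsUnit P'.det) (d : ℝ) (B : Matrix (Fin n) (Fin m) ℝ)
    (R : Matrix (Fin m) (Fin m) ℝ) :
    1 + d • (P' * B * R⁻¹ * Bᵀ) = P' * (P'⁻¹ + d • (B * R⁻¹ * Bᵀ)) := by
  rw [Matrix.mul_add, Matrix.mul_smul, Matrix.mul_nonsing_inv _ hP']
  simp only [← Matrix.mul_assoc]

lemma E_posdef (hP' : P'.PosDef) (hd : 0 ≤ d) (hS : (B * R⁻¹ * Bᵀ).PosSemidef) :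
    (P'⁻¹ + d • (B * R⁻¹ * Bᵀ)).PosDef :=
  hP'.inv.add_posSemidef (smul_posSemidef hS hd)

lemma W_eq (hP' : P'.PosDef) (hd : 0 ≤ d) (hS : (B * R⁻¹ * Bᵀ).PosSemidef) :
    (1 + d • (P' * B * R⁻¹ * Bᵀ))⁻¹ * P' = (P'⁻¹ + d • (B * R⁻¹ * Bᵀ))⁻¹ := by
  have hdet : IsUnit P'.det := ((Matrix.isUnit_iff_isUnit_det _).mp hP'.isUnit)
  rw [Mk_eq hdet, Matrix.mul_inv_rev, Matrix.mul_assoc,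
    Matrix.nonsing_inv_mul _ hdet, Matrix.mul_one]

lemma Mk_isUnit (hP' : P'.PosDef) (hd : 0 ≤ d) (hS : (B * R⁻¹ * Bᵀ).PosSemidef) :
    IsUnit (1 + d • (P' * B * R⁻¹ * Bᵀ)).det := by
  have hE := E_posdef hP' hd hS
  rw [Mk_eq ((Matrix.isUnit_iff_isUnit_det _).mp hP'.isUnit), Matrix.det_mul]
  exact (((Matrix.isUnit_iff_isUnit_det _).mp hP'.isUnit)).mul
    ((Matrix.isUnit_iff_isUnit_det _).mp hE.isUnit)

lemma WP_posdef (hP' : P'.PosDef) (hd : 0 ≤ d) (hS : (B * R⁻¹ * Bᵀ).PosSemidef) :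
    ((1 + d • (P' * B * R⁻¹ * Bᵀ))⁻¹ * P').PosDef := by
  rw [W_eq hP' hd hS]
  exact (E_posdef hP' hd hS).inv

lemma T_posdef (hR : R.PosDef) (hP' : P'.PosSemidef) (hd : 0 ≤ d) :
    (R + d • (Bᵀ * P' * B)).PosDef :=
  hR.add_posSemidef (smul_posSemidef (conj_psd _ hP' B) hd)

lemma Tinv_B (hR : R.PosDef) (hP' : P'.PosDef) (hd : 0 ≤ d) :
    (R + d • (Bᵀ * P' * B))⁻¹ * Bᵀ
      = R⁻¹ * Bᵀ * (1 + d • (P' * B * R⁻¹ * Bᵀ))⁻¹ := by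
  have hS := S_psd hR B
  have hRdet : IsUnit R.det := (Matrix.isUnit_iff_isUnit_det _).mp hR.isUnit
  have hRR : R * R⁻¹ = 1 := Matrix.mul_nonsing_inv _ hRdet
  have hTdet : IsUnit (R + d • (Bᵀ * P' * B)).det :=
    (Matrix.isUnit_iff_isUnit_det _).mp (T_posdef hR hP'.posSemidef hd).isUnit
  have hMdet := Mk_isUnit hP' hd hS
  have hMM : (1 + d • (P' * B * R⁻¹ * Bᵀ)) * (1 + d • (P' * B * R⁻¹ * Bᵀ))⁻¹ = 1 :=
    Matrix.mul_nonsing_inv _ hMdet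
  have hTT : (R + d • (Bᵀ * P' * B))⁻¹ * (R + d • (Bᵀ * P' * B)) = 1 :=
    Matrix.nonsing_inv_mul _ hTdet
  have h1 : Bᵀ * (1 + d • (P' * B * R⁻¹ * Bᵀ))
      = (R + d • (Bᵀ * P' * B)) * (R⁻¹ * Bᵀ) := by
    rw [Matrix.mul_add, Matrix.mul_one, Matrix.add_mul, Matrix.mul_smul, Matrix.smul_mul]
    simp only [← Matrix.mul_assoc]
    rw [hRR, Matrix.one_mul]
  have h2 := congrArg (fun X => (R + d • (Bᵀ * P' * B))⁻¹ * X
      * (1 + d • (P' * B * R⁻¹ * Bᵀ))⁻¹) h1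
  simp only [← Matrix.mul_assoc] at h2
  rw [Matrix.mul_assoc ((R + d • (Bᵀ * P' * B))⁻¹ * Bᵀ), hMM, Matrix.mul_one, hTT,
    Matrix.one_mul] at h2
  exact h2

lemma W2_eq (hR : R.PosDef) (hP' : P'.PosDef) (hd : 0 ≤ d) :
    (1 + d • (P' * B * R⁻¹ * Bᵀ))⁻¹
      = 1 - d • (P' * B * R⁻¹ * Bᵀ * (1 + d • (P' * B * R⁻¹ * Bᵀ))⁻¹) := by
  have hMdet := Mk_isUnit hP' hd (S_psd hR B)
  have hMM : (1 + d • (P' * B * R⁻¹ * Bᵀ)) * (1 + d • (P' * B * R⁻¹ * Bᵀ))⁻¹ = 1 :=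
    Matrix.mul_nonsing_inv _ hMdet
  rw [Matrix.add_mul, Matrix.one_mul, Matrix.smul_mul] at hMM

  linear_combination (norm := abel) hMM

end key

lemma mulVec_dp {a b : ℕ} (C : Matrix (Fin a) (Fin b) ℝ) (z : Fin b → ℝ) (w : Fin a → ℝ) :
    (C *ᵥ z) ⬝ᵥ w = z ⬝ᵥ (Cᵀ *ᵥ w) := by
  rw [dp_comm, transpose_transpose, dotProduct_comm]

lemma dp_mul {a b c e : ℕ} (C : Matrix (Fin a) (Fin b) ℝ) (X : Matrix (Fin a) (Fin c) ℝ)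
    (D : Matrix (Fin c) (Fin e) ℝ) (z : Fin b → ℝ) (s : Fin e → ℝ) :
    (C *ᵥ z) ⬝ᵥ (X *ᵥ (D *ᵥ s)) = z ⬝ᵥ ((Cᵀ * X * D) *ᵥ s) := by
  rw [mulVec_mulVec, mulVec_dp, mulVec_mulVec, ← Matrix.mul_assoc]

lemma stage_identity {n m : ℕ} (d : ℝ) (A : Matrix (Fin n) (Fin n) ℝ)
    (B : Matrix (Fin n) (Fin m) ℝ)
    (Q P' Δ' Pk Δk W : Matrix (Fin n) (Fin n) ℝ) (R T : Matrix (Fin m) (Fin m) ℝ)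
    (hP' : P'ᵀ = P')
    (hTdef : T = R + d • (Bᵀ * P' * B))
    (hTsym : Tᵀ = T) (hTisym : (T⁻¹)ᵀ = T⁻¹)
    (hTi : T⁻¹ * Bᵀ = R⁻¹ * Bᵀ * W)
    (hTT : T * T⁻¹ = 1) (hTT2 : T⁻¹ * T = 1)
    (hW2 : W = 1 - d • (P' * B * R⁻¹ * Bᵀ * W))
    (hPk : Pk = Aᵀ * W * P' * A + Q)
    (hΔk : Δk = Aᵀ * W * Δ' - Q)
    (z s : Fin n → ℝ) (u : Fin m → ℝ) :
    u ⬝ᵥ (R *ᵥ u) + d * (z ⬝ᵥ (Q *ᵥ z)) - 2 * (z ⬝ᵥ (Q *ᵥ s))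
      + (d * ((A *ᵥ z + B *ᵥ u) ⬝ᵥ (P' *ᵥ (A *ᵥ z + B *ᵥ u)))
         + 2 * ((A *ᵥ z + B *ᵥ u) ⬝ᵥ (Δ' *ᵥ s)))
    = (u - -(T⁻¹ *ᵥ (d • ((Bᵀ * P' * A) *ᵥ z) + (Bᵀ * Δ') *ᵥ s))) ⬝ᵥ
        (T *ᵥ (u - -(T⁻¹ *ᵥ (d • ((Bᵀ * P' * A) *ᵥ z) + (Bᵀ * Δ') *ᵥ s))))
      + (d * (z ⬝ᵥ (Pk *ᵥ z)) + 2 * (z ⬝ᵥ (Δk *ᵥ s)))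
      - ((Bᵀ * Δ') *ᵥ s) ⬝ᵥ (T⁻¹ *ᵥ ((Bᵀ * Δ') *ᵥ s)) := by
  set y₁ : Fin m → ℝ := (Bᵀ * P' * A) *ᵥ z with hy₁
  set y₂ : Fin m → ℝ := (Bᵀ * Δ') *ᵥ s with hy₂
  have hXid : P' * B * R⁻¹ * Bᵀ * W = P' * B * T⁻¹ * Bᵀ := by
    have hTi' := hTi
    simp only [Matrix.mul_assoc] at hTi' ⊢
    rw [← hTi']
  have hW2' : W = 1 - d • (P' * B * T⁻¹ * Bᵀ) := by rw [hW2, hXid]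
  have hWPA : Aᵀ * W * P' * A
      = Aᵀ * P' * A - d • (Aᵀ * P' * B * T⁻¹ * Bᵀ * P' * A) := by
    rw [hW2', Matrix.mul_sub, Matrix.mul_one, Matrix.sub_mul, Matrix.sub_mul,
      Matrix.mul_smul, Matrix.smul_mul, Matrix.smul_mul]
    simp only [Matrix.mul_assoc]
  have hWΔ : Aᵀ * W * Δ'
      = Aᵀ * Δ' - d • (Aᵀ * P' * B * T⁻¹ * Bᵀ * Δ') := by
    rw [hW2', Matrix.mul_sub, Matrix.mul_one, Matrix.sub_mul,
      Matrix.mul_smul, Matrix.smul_mul]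
    simp only [Matrix.mul_assoc]
  have e1 : (A *ᵥ z + B *ᵥ u) ⬝ᵥ (P' *ᵥ (A *ᵥ z + B *ᵥ u))
      = z ⬝ᵥ ((Aᵀ * P' * A) *ᵥ z) + 2 * (u ⬝ᵥ y₁) + u ⬝ᵥ ((Bᵀ * P' * B) *ᵥ u) := by
    rw [hy₁, Matrix.mulVec_add, dotProduct_add, add_dotProduct, add_dotProduct,
      dp_mul A P' A, dp_mul A P' B, dp_mul B P' A, dp_mul B P' B]
    have h : z ⬝ᵥ ((Aᵀ * P' * B) *ᵥ u) = u ⬝ᵥ ((Bᵀ * P' * A) *ᵥ z) := by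
      rw [dp_comm]
      congr 2
      simp only [Matrix.transpose_mul, transpose_transpose, hP', Matrix.mul_assoc]
    rw [h]; ring
  have e2 : (A *ᵥ z + B *ᵥ u) ⬝ᵥ (Δ' *ᵥ s)
      = z ⬝ᵥ ((Aᵀ * Δ') *ᵥ s) + u ⬝ᵥ y₂ := by
    rw [hy₂, add_dotProduct, mulVec_dp A, mulVec_dp B, mulVec_mulVec, mulVec_mulVec]
  have hTφ : T *ᵥ (T⁻¹ *ᵥ (d • y₁ + y₂)) = d • y₁ + y₂ := by
    rw [mulVec_mulVec, hTT, one_mulVec]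
  have e3 : (u - -(T⁻¹ *ᵥ (d • y₁ + y₂))) ⬝ᵥ (T *ᵥ (u - -(T⁻¹ *ᵥ (d • y₁ + y₂))))
      = u ⬝ᵥ (T *ᵥ u) + 2 * (u ⬝ᵥ (d • y₁ + y₂))
        + (d • y₁ + y₂) ⬝ᵥ (T⁻¹ *ᵥ (d • y₁ + y₂)) := by
    have h1 : (T⁻¹ *ᵥ (d • y₁ + y₂)) ⬝ᵥ (T *ᵥ u) = u ⬝ᵥ (d • y₁ + y₂) := by
      rw [mulVec_dp, hTisym, mulVec_mulVec, hTT2, one_mulVec, dotProduct_comm]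
    generalize hc : T⁻¹ *ᵥ (d • y₁ + y₂) = c at hTφ h1 ⊢
    rw [sub_neg_eq_add, Matrix.mulVec_add, hTφ, dotProduct_add, add_dotProduct,
      add_dotProduct, h1, dotProduct_comm c]
    ring
  have e4 : u ⬝ᵥ (T *ᵥ u) = u ⬝ᵥ (R *ᵥ u) + d * (u ⬝ᵥ ((Bᵀ * P' * B) *ᵥ u)) := by
    rw [hTdef, Matrix.add_mulVec, dotProduct_add, Matrix.smul_mulVec,
      dotProduct_smul, smul_eq_mul]
  have e5 : u ⬝ᵥ (d • y₁ + y₂) = d * (u ⬝ᵥ y₁) + u ⬝ᵥ y₂ := by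
    rw [dotProduct_add, dotProduct_smul, smul_eq_mul]
  have hsymTi : ∀ (p q : Fin m → ℝ), p ⬝ᵥ (T⁻¹ *ᵥ q) = q ⬝ᵥ (T⁻¹ *ᵥ p) := by
    intro p q; rw [dp_comm, hTisym]
  have hq1 : y₁ ⬝ᵥ (T⁻¹ *ᵥ y₁) = z ⬝ᵥ ((Aᵀ * P' * B * T⁻¹ * Bᵀ * P' * A) *ᵥ z) := by
    rw [hy₁, dp_mul]
    congr 2
    simp only [Matrix.transpose_mul, transpose_transpose, hP', Matrix.mul_assoc]
  have hq2 : y₁ ⬝ᵥ (T⁻¹ *ᵥ y₂) = z ⬝ᵥ ((Aᵀ * P' * B * T⁻¹ * Bᵀ * Δ') *ᵥ s) := by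
    rw [hy₁, hy₂, dp_mul]
    congr 2
    simp only [Matrix.transpose_mul, transpose_transpose, hP', Matrix.mul_assoc]
  have e6 : (d • y₁ + y₂) ⬝ᵥ (T⁻¹ *ᵥ (d • y₁ + y₂))
      = d * (d * (z ⬝ᵥ ((Aᵀ * P' * B * T⁻¹ * Bᵀ * P' * A) *ᵥ z)))
        + 2 * (d * (z ⬝ᵥ ((Aᵀ * P' * B * T⁻¹ * Bᵀ * Δ') *ᵥ s)))
        + y₂ ⬝ᵥ (T⁻¹ *ᵥ y₂) := by
    rw [Matrix.mulVec_add, dotProduct_add, add_dotProduct, add_dotProduct,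
      Matrix.mulVec_smul, dotProduct_smul, dotProduct_smul, smul_dotProduct,
      smul_dotProduct, smul_eq_mul, smul_eq_mul, smul_eq_mul, smul_eq_mul,
      hsymTi y₂ y₁, hq1, hq2]
    ring
  have e7 : z ⬝ᵥ (Pk *ᵥ z)
      = z ⬝ᵥ ((Aᵀ * P' * A) *ᵥ z)
        - d * (z ⬝ᵥ ((Aᵀ * P' * B * T⁻¹ * Bᵀ * P' * A) *ᵥ z)) + z ⬝ᵥ (Q *ᵥ z) := by
    rw [hPk, hWPA, Matrix.add_mulVec, dotProduct_add, Matrix.sub_mulVec, dotProduct_sub,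
      Matrix.smul_mulVec, dotProduct_smul, smul_eq_mul]
  have e8 : z ⬝ᵥ (Δk *ᵥ s)
      = z ⬝ᵥ ((Aᵀ * Δ') *ᵥ s)
        - d * (z ⬝ᵥ ((Aᵀ * P' * B * T⁻¹ * Bᵀ * Δ') *ᵥ s)) - z ⬝ᵥ (Q *ᵥ s) := by
    rw [hΔk, hWΔ, Matrix.sub_mulVec, dotProduct_sub, Matrix.sub_mulVec, dotProduct_sub,
      Matrix.smul_mulVec, dotProduct_smul, smul_eq_mul]
  rw [e1, e2, e3, e4, e5, e6, e7, e8]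
  ring

lemma sum_quad {n M : ℕ} (Q : Matrix (Fin n) (Fin n) ℝ) (hQ : Qᵀ = Q)
    (a : Fin M → ℝ) (x : Fin M → Fin n → ℝ) (z : Fin n → ℝ) :
    ∑ j, a j * ((z - x j) ⬝ᵥ (Q *ᵥ (z - x j)))
    = (∑ j, a j) * (z ⬝ᵥ (Q *ᵥ z)) - 2 * (z ⬝ᵥ (Q *ᵥ (∑ j, a j • x j)))
      + ∑ j, a j * (x j ⬝ᵥ (Q *ᵥ x j)) := by
  have hs : z ⬝ᵥ (Q *ᵥ (∑ j, a j • x j)) = ∑ j, a j * (z ⬝ᵥ (Q *ᵥ x j)) := by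
    have h1 : Q *ᵥ (∑ j, a j • x j) = ∑ j, a j • (Q *ᵥ x j) := by
      rw [show Q *ᵥ (∑ j, a j • x j) = Q.mulVecLin (∑ j, a j • x j) from rfl, map_sum]
      simp [Matrix.mulVecLin_apply, Matrix.mulVec_smul]
    rw [h1]
    have h2 : ∀ (w : Fin n → ℝ) (f : Fin M → Fin n → ℝ),
        w ⬝ᵥ (∑ j, f j) = ∑ j, w ⬝ᵥ f j := by
      intro w f
      simp only [dotProduct, Finset.mul_sum, Finset.sum_apply]
      rw [Finset.sum_comm]
    rw [show (∑ j, a j • Q *ᵥ x j) = ∑ j, (fun j => a j • (Q *ᵥ x j)) j from rfl, h2]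
    simp [dotProduct_smul]
  have hterm : ∀ j : Fin M, a j * ((z - x j) ⬝ᵥ (Q *ᵥ (z - x j)))
      = a j * (z ⬝ᵥ (Q *ᵥ z)) - 2 * (a j * (z ⬝ᵥ (Q *ᵥ x j)))
        + a j * (x j ⬝ᵥ (Q *ᵥ x j)) := by
    intro j
    have hx : (x j) ⬝ᵥ (Q *ᵥ z) = z ⬝ᵥ (Q *ᵥ x j) := by rw [dp_comm, hQ]
    rw [Matrix.mulVec_sub, dotProduct_sub, sub_dotProduct, sub_dotProduct, hx]
    ring
  simp only [hterm]
  rw [hs, Finset.sum_mul, Finset.mul_sum]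
  rw [← Finset.sum_sub_distrib, ← Finset.sum_add_distrib]

/-- Closed-loop trajectory for a feedback policy `Φ`. -/
noncomputable def fbTraj {n m : ℕ} (A : Matrix (Fin n) (Fin n) ℝ)
    (B : Matrix (Fin n) (Fin m) ℝ) (x0 : Fin n → ℝ)
    (Φ : ℕ → (Fin n → ℝ) → (Fin m → ℝ)) : ℕ → Fin n → ℝ
  | 0 => x0
  | k + 1 => A *ᵥ fbTraj A B x0 Φ k + B *ᵥ Φ k (fbTraj A B x0 Φ k)

lemma stateTraj_congr {n m : ℕ} (A : Matrix (Fin n) (Fin n) ℝ)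
    (B : Matrix (Fin n) (Fin m) ℝ) (x0 : Fin n → ℝ) (U U' : ℕ → Fin m → ℝ) (k : ℕ)
    (h : ∀ j < k, U j = U' j) : stateTraj A B x0 U k = stateTraj A B x0 U' k := by
  induction k with
  | zero => rfl
  | succ k ih =>
      rw [stateTraj, stateTraj, ih (fun j hj => h j (Nat.lt_succ_of_lt hj)),
        h k (Nat.lt_succ_self k)]

lemma extCtrl_lt {m N : ℕ} (U : Fin N → Fin m → ℝ) (k : ℕ) (h : k < N) :
    extCtrl U k = U ⟨k, h⟩ := dif_pos h

lemma extCtrl_fin {m N : ℕ} (U : Fin N → Fin m → ℝ) (k : Fin N) :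
    extCtrl U ↑k = U k := by rw [extCtrl_lt U ↑k k.isLt]

noncomputable def TmF {n m : ℕ} (d : ℝ) (B : Matrix (Fin n) (Fin m) ℝ)
    (R : Matrix (Fin m) (Fin m) ℝ) (P : ℕ → Matrix (Fin n) (Fin n) ℝ) (k : ℕ) :
    Matrix (Fin m) (Fin m) ℝ := R + d • (Bᵀ * P (k+1) * B)

noncomputable def KfF {n m : ℕ} (d : ℝ) (A : Matrix (Fin n) (Fin n) ℝ)
    (B : Matrix (Fin n) (Fin m) ℝ) (R : Matrix (Fin m) (Fin m) ℝ)
    (P : ℕ → Matrix (Fin n) (Fin n) ℝ) (k : ℕ) : Matrix (Fin m) (Fin n) ℝ :=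
  -(R⁻¹ * Bᵀ * (1 + d • (P (k+1) * B * R⁻¹ * Bᵀ))⁻¹ * P (k+1) * A)

noncomputable def GfF {n m : ℕ} (d : ℝ) (B : Matrix (Fin n) (Fin m) ℝ)
    (R : Matrix (Fin m) (Fin m) ℝ) (P Δ : ℕ → Matrix (Fin n) (Fin n) ℝ) (k : ℕ) :
    Matrix (Fin m) (Fin n) ℝ :=
  -(R⁻¹ * Bᵀ * (1 + d • (P (k+1) * B * R⁻¹ * Bᵀ))⁻¹ * Δ (k+1))

noncomputable def PhiF {n m : ℕ} (d : ℝ) (A : Matrix (Fin n) (Fin n) ℝ)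
    (B : Matrix (Fin n) (Fin m) ℝ) (R : Matrix (Fin m) (Fin m) ℝ)
    (P Δ : ℕ → Matrix (Fin n) (Fin n) ℝ) (s₀ : Fin n → ℝ) (k : ℕ) (z : Fin n → ℝ) :
    Fin m → ℝ :=
  d • (KfF d A B R P k *ᵥ z) + GfF d B R P Δ k *ᵥ s₀

noncomputable def VqF {n : ℕ} (d : ℝ) (P Δ : ℕ → Matrix (Fin n) (Fin n) ℝ)
    (s₀ : Fin n → ℝ) (k : ℕ) (z : Fin n → ℝ) : ℝ :=
  d * (z ⬝ᵥ (P k *ᵥ z)) + 2 * (z ⬝ᵥ (Δ k *ᵥ s₀))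

noncomputable def gamF {n m : ℕ} (d : ℝ) (B : Matrix (Fin n) (Fin m) ℝ)
    (R : Matrix (Fin m) (Fin m) ℝ) (P Δ : ℕ → Matrix (Fin n) (Fin n) ℝ)
    (s₀ : Fin n → ℝ) (k : ℕ) : ℝ :=
  ((Bᵀ * Δ (k+1)) *ᵥ s₀) ⬝ᵥ ((TmF d B R P k)⁻¹ *ᵥ ((Bᵀ * Δ (k+1)) *ᵥ s₀))

theorem stmt1 (n m M N : ℕ) (hN : 1 ≤ N)
    (A : Matrix (Fin n) (Fin n) ℝ) (B : Matrix (Fin n) (Fin m) ℝ)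
    (Q QN : Matrix (Fin n) (Fin n) ℝ) (R : Matrix (Fin m) (Fin m) ℝ)
    (hQ : Q.PosDef) (hQN : QN.PosDef) (hR : R.PosDef)
    (a : Fin M → ℝ) (ha : ∀ j, a j = 0 ∨ a j = 1)
    (d : ℝ) (hd : d = ∑ j, a j) (hd1 : 1 ≤ d)
    (x : Fin M → Fin n → ℝ) (x0 : Fin n → ℝ)
    (P Δ : ℕ → Matrix (Fin n) (Fin n) ℝ)
    (hPN : P N = QN)
    (hPrec : ∀ k < N,
      P k = Aᵀ * (1 + d • (P (k + 1) * B * R⁻¹ * Bᵀ))⁻¹ * P (k + 1) * A + Q)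
    (hΔN : Δ N = -QN)
    (hΔrec : ∀ k < N,
      Δ k = Aᵀ * (1 + d • (P (k + 1) * B * R⁻¹ * Bᵀ))⁻¹ * Δ (k + 1) - Q) :
    ∃ Ustar : Fin N → Fin m → ℝ,
      (∀ V : Fin N → Fin m → ℝ, V ≠ Ustar →
        rhcCost A B Q QN R a x x0 Ustar < rhcCost A B Q QN R a x x0 V) ∧
      ∀ k : Fin N,
        Ustar k = ∑ j, a j •
          ((-(R⁻¹ * Bᵀ * (1 + d • (P ((k : ℕ) + 1) * B * R⁻¹ * Bᵀ))⁻¹ *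
              P ((k : ℕ) + 1) * A)) *ᵥ stateTraj A B x0 (extCtrl Ustar) k +
            (-(R⁻¹ * Bᵀ * (1 + d • (P ((k : ℕ) + 1) * B * R⁻¹ * Bᵀ))⁻¹ *
              Δ ((k : ℕ) + 1))) *ᵥ x j) := by
  classical
  have hd0 : (0:ℝ) ≤ d := le_trans zero_le_one hd1
  have hSpsd : (B * R⁻¹ * Bᵀ).PosSemidef := S_psd hR B
  have hQt : Qᵀ = Q := (herm_real Q).mp hQ.isHermitian
  have hQNt : QNᵀ = QN := (herm_real QN).mp hQN.isHermitian
  set s₀ : Fin n → ℝ := ∑ j, a j • x j with hs₀def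
  -- positive definiteness of the Riccati matrices
  have hPpos : ∀ k, k ≤ N → (P k).PosDef := by
    have key : ∀ i, ∀ k, k ≤ N → N - k ≤ i → (P k).PosDef := by
      intro i
      induction i with
      | zero =>
          intro k hk hi
          have hkN : k = N := by omega
          rw [hkN, hPN]; exact hQN
      | succ i ih =>
          intro k hk hi
          rcases eq_or_lt_of_le hk with hke | hkN
          · rw [hke, hPN]; exact hQN
          · have hP1 : (P (k+1)).PosDef := ih (k+1) hkN (by omega)
            rw [hPrec k hkN]
            have hassoc : Aᵀ * (1 + d • (P (k + 1) * B * R⁻¹ * Bᵀ))⁻¹ * P (k + 1) * A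
                = Aᵀ * ((1 + d • (P (k + 1) * B * R⁻¹ * Bᵀ))⁻¹ * P (k + 1)) * A := by
              rw [Matrix.mul_assoc Aᵀ]
            rw [hassoc]
            exact Matrix.PosDef.posSemidef_add
              (conj_psd _ (WP_posdef hP1 hd0 hSpsd).posSemidef A) hQ
    intro k hk
    exact key (N - k) k hk le_rfl
  have hP1 : ∀ k, k < N → (P (k+1)).PosDef := fun k hk => hPpos (k+1) hk
  have hP1t : ∀ k, k < N → (P (k+1))ᵀ = P (k+1) :=
    fun k hk => (herm_real _).mp (hP1 k hk).isHermitian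
  have hTpos : ∀ k, k < N → (TmF d B R P k).PosDef :=
    fun k hk => T_posdef hR (hP1 k hk).posSemidef hd0
  have hTsym : ∀ k, k < N → (TmF d B R P k)ᵀ = TmF d B R P k :=
    fun k hk => (herm_real _).mp (hTpos k hk).isHermitian
  have hTdet : ∀ k, k < N → IsUnit (TmF d B R P k).det :=
    fun k hk => (Matrix.isUnit_iff_isUnit_det _).mp (hTpos k hk).isUnit
  have hTT : ∀ k, k < N → TmF d B R P k * (TmF d B R P k)⁻¹ = 1 :=
    fun k hk => Matrix.mul_nonsing_inv _ (hTdet k hk)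
  have hTT2 : ∀ k, k < N → (TmF d B R P k)⁻¹ * TmF d B R P k = 1 :=
    fun k hk => Matrix.nonsing_inv_mul _ (hTdet k hk)
  have hTisym : ∀ k, k < N → ((TmF d B R P k)⁻¹)ᵀ = (TmF d B R P k)⁻¹ := by
    intro k hk
    rw [Matrix.transpose_nonsing_inv, hTsym k hk]
  have hTi : ∀ k, k < N → (TmF d B R P k)⁻¹ * Bᵀ
      = R⁻¹ * Bᵀ * (1 + d • (P (k+1) * B * R⁻¹ * Bᵀ))⁻¹ :=
    fun k hk => Tinv_B hR (hP1 k hk) hd0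
  have hW2 : ∀ k, k < N → (1 + d • (P (k+1) * B * R⁻¹ * Bᵀ))⁻¹
      = 1 - d • (P (k+1) * B * R⁻¹ * Bᵀ * (1 + d • (P (k+1) * B * R⁻¹ * Bᵀ))⁻¹) :=
    fun k hk => W2_eq hR (hP1 k hk) hd0
  -- feedback law in "completed square" form
  have hΦeq : ∀ k, k < N → ∀ z : Fin n → ℝ,
      PhiF d A B R P Δ s₀ k z
        = -((TmF d B R P k)⁻¹ *ᵥ
            (d • ((Bᵀ * P (k+1) * A) *ᵥ z) + (Bᵀ * Δ (k+1)) *ᵥ s₀)) := by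
    intro k hk z
    have hKT : (TmF d B R P k)⁻¹ * (Bᵀ * P (k+1) * A)
        = R⁻¹ * Bᵀ * (1 + d • (P (k+1) * B * R⁻¹ * Bᵀ))⁻¹ * P (k+1) * A := by
      have h := congrArg (fun X => X * (P (k+1) * A)) (hTi k hk)
      simp only [Matrix.mul_assoc] at h ⊢
      exact h
    have hGT : (TmF d B R P k)⁻¹ * (Bᵀ * Δ (k+1))
        = R⁻¹ * Bᵀ * (1 + d • (P (k+1) * B * R⁻¹ * Bᵀ))⁻¹ * Δ (k+1) := by
      have h := congrArg (fun X => X * Δ (k+1)) (hTi k hk)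
      simp only [Matrix.mul_assoc] at h ⊢
      exact h
    simp only [PhiF, KfF, GfF]
    rw [Matrix.mulVec_add, Matrix.mulVec_smul, mulVec_mulVec, mulVec_mulVec, hKT, hGT,
      neg_add, ← smul_neg, ← Matrix.neg_mulVec, ← Matrix.neg_mulVec]
  -- one-step completion of squares along any trajectory
  have hstage : ∀ (U : ℕ → Fin m → ℝ) (k : ℕ), k < N →
      U k ⬝ᵥ (R *ᵥ U k)
        + d * (stateTraj A B x0 U k ⬝ᵥ (Q *ᵥ stateTraj A B x0 U k))
        - 2 * (stateTraj A B x0 U k ⬝ᵥ (Q *ᵥ s₀))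
        + VqF d P Δ s₀ (k+1) (stateTraj A B x0 U (k+1))
      = (U k - PhiF d A B R P Δ s₀ k (stateTraj A B x0 U k)) ⬝ᵥ
          (TmF d B R P k *ᵥ (U k - PhiF d A B R P Δ s₀ k (stateTraj A B x0 U k)))
        + VqF d P Δ s₀ k (stateTraj A B x0 U k) - gamF d B R P Δ s₀ k := by
    intro U k hk
    have hnext : stateTraj A B x0 U (k+1)
        = A *ᵥ stateTraj A B x0 U k + B *ᵥ U k := rfl
    rw [hnext, hΦeq k hk]
    simp only [VqF, gamF]
    exact stage_identity d A B Q (P (k+1)) (Δ (k+1)) (P k) (Δ k)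
      ((1 + d • (P (k+1) * B * R⁻¹ * Bᵀ))⁻¹) R (TmF d B R P k)
      (hP1t k hk) rfl (hTsym k hk) (hTisym k hk) (hTi k hk) (hTT k hk) (hTT2 k hk)
      (hW2 k hk) (hPrec k hk) (hΔrec k hk) (stateTraj A B x0 U k) s₀ (U k)
  -- value of Vq at the horizon
  have hVqN : ∀ z : Fin n → ℝ, VqF d P Δ s₀ N z
      = d * (z ⬝ᵥ (QN *ᵥ z)) - 2 * (z ⬝ᵥ (QN *ᵥ s₀)) := by
    intro z
    simp only [VqF, hPN, hΔN, Matrix.neg_mulVec, dotProduct_neg]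
    ring
  -- the cost identity
  have hcost : ∀ V : Fin N → Fin m → ℝ,
      rhcCost A B Q QN R a x x0 V
        = (∑ k ∈ Finset.range N,
            (extCtrl V k - PhiF d A B R P Δ s₀ k (stateTraj A B x0 (extCtrl V) k)) ⬝ᵥ
              (TmF d B R P k *ᵥ
                (extCtrl V k - PhiF d A B R P Δ s₀ k (stateTraj A B x0 (extCtrl V) k))))
          + (VqF d P Δ s₀ 0 x0
             + (∑ k ∈ Finset.range N,
                 ((∑ j, a j * (x j ⬝ᵥ (Q *ᵥ x j))) - gamF d B R P Δ s₀ k))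
             + ∑ j, a j * (x j ⬝ᵥ (QN *ᵥ x j))) := by
    intro V
    unfold rhcCost
    have hterm : ∀ k : Fin N,
        (V k ⬝ᵥ (R *ᵥ V k)
          + ∑ j, a j * ((stateTraj A B x0 (extCtrl V) ↑k - x j) ⬝ᵥ
              (Q *ᵥ (stateTraj A B x0 (extCtrl V) ↑k - x j))))
        = extCtrl V ↑k ⬝ᵥ (R *ᵥ extCtrl V ↑k)
            + (d * (stateTraj A B x0 (extCtrl V) ↑k ⬝ᵥ (Q *ᵥ stateTraj A B x0 (extCtrl V) ↑k))
               - 2 * (stateTraj A B x0 (extCtrl V) ↑k ⬝ᵥ (Q *ᵥ s₀))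
               + (∑ j, a j * (x j ⬝ᵥ (Q *ᵥ x j)))) := by
      intro k
      rw [extCtrl_fin, sum_quad Q hQt a x, ← hd, ← hs₀def]
    rw [Finset.sum_congr rfl (fun k _ => hterm k),
      Fin.sum_univ_eq_sum_range (fun i => extCtrl V i ⬝ᵥ (R *ᵥ extCtrl V i)
            + (d * (stateTraj A B x0 (extCtrl V) i ⬝ᵥ (Q *ᵥ stateTraj A B x0 (extCtrl V) i))
               - 2 * (stateTraj A B x0 (extCtrl V) i ⬝ᵥ (Q *ᵥ s₀))
               + (∑ j, a j * (x j ⬝ᵥ (Q *ᵥ x j))))) N]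
    have hfin : ∑ j, a j * ((stateTraj A B x0 (extCtrl V) N - x j) ⬝ᵥ
          (QN *ᵥ (stateTraj A B x0 (extCtrl V) N - x j)))
        = VqF d P Δ s₀ N (stateTraj A B x0 (extCtrl V) N)
          + ∑ j, a j * (x j ⬝ᵥ (QN *ᵥ x j)) := by
      rw [sum_quad QN hQNt a x, ← hd, ← hs₀def, hVqN]
    rw [hfin]
    have hsum : ∀ i ∈ Finset.range N,
        (extCtrl V i ⬝ᵥ (R *ᵥ extCtrl V i)
          + (d * (stateTraj A B x0 (extCtrl V) i ⬝ᵥ (Q *ᵥ stateTraj A B x0 (extCtrl V) i))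
             - 2 * (stateTraj A B x0 (extCtrl V) i ⬝ᵥ (Q *ᵥ s₀))
             + (∑ j, a j * (x j ⬝ᵥ (Q *ᵥ x j)))))
        = ((extCtrl V i - PhiF d A B R P Δ s₀ i (stateTraj A B x0 (extCtrl V) i)) ⬝ᵥ
              (TmF d B R P i *ᵥ
                (extCtrl V i - PhiF d A B R P Δ s₀ i (stateTraj A B x0 (extCtrl V) i)))
            + ((∑ j, a j * (x j ⬝ᵥ (Q *ᵥ x j))) - gamF d B R P Δ s₀ i))
          + (VqF d P Δ s₀ i (stateTraj A B x0 (extCtrl V) i)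
             - VqF d P Δ s₀ (i+1) (stateTraj A B x0 (extCtrl V) (i+1))) := by
      intro i hi
      have h := hstage (extCtrl V) i (Finset.mem_range.mp hi)
      linarith
    rw [Finset.sum_congr rfl hsum, Finset.sum_add_distrib,
      Finset.sum_range_sub' (fun i => VqF d P Δ s₀ i (stateTraj A B x0 (extCtrl V) i)),
      Finset.sum_add_distrib]
    have hζ0 : stateTraj A B x0 (extCtrl V) 0 = x0 := rfl
    rw [hζ0]
    ring
  -- the optimal control
  set Φ₀ := PhiF d A B R P Δ s₀ with hΦ₀
  set Us : Fin N → Fin m → ℝ := fun k => Φ₀ ↑k (fbTraj A B x0 Φ₀ ↑k) with hUs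
  have hζUs : ∀ k, k ≤ N →
      stateTraj A B x0 (extCtrl Us) k = fbTraj A B x0 Φ₀ k := by
    intro k
    induction k with
    | zero => intro _; rfl
    | succ k ih =>
        intro hk1
        have hkN : k < N := hk1
        have hx : stateTraj A B x0 (extCtrl Us) (k+1)
            = A *ᵥ stateTraj A B x0 (extCtrl Us) k + B *ᵥ extCtrl Us k := rfl
        rw [hx, ih (le_of_lt hkN), extCtrl_lt Us k hkN, hUs]
        rfl
  have hsqUs : ∀ i ∈ Finset.range N,
      (extCtrl Us i - PhiF d A B R P Δ s₀ i (stateTraj A B x0 (extCtrl Us) i)) ⬝ᵥ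
        (TmF d B R P i *ᵥ
          (extCtrl Us i - PhiF d A B R P Δ s₀ i (stateTraj A B x0 (extCtrl Us) i))) = 0 := by
    intro i hi
    have hiN : i < N := Finset.mem_range.mp hi
    have h1 : extCtrl Us i = PhiF d A B R P Δ s₀ i (stateTraj A B x0 (extCtrl Us) i) := by
      rw [extCtrl_lt Us i hiN, hUs, hζUs i (le_of_lt hiN), hΦ₀]
    rw [h1]
    simp
  have hUscost : rhcCost A B Q QN R a x x0 Us
      = (VqF d P Δ s₀ 0 x0
         + (∑ k ∈ Finset.range N,
             ((∑ j, a j * (x j ⬝ᵥ (Q *ᵥ x j))) - gamF d B R P Δ s₀ k))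
         + ∑ j, a j * (x j ⬝ᵥ (QN *ᵥ x j))) := by
    rw [hcost Us, Finset.sum_eq_zero hsqUs, zero_add]
  refine ⟨Us, ?_, ?_⟩
  · -- strict minimality
    intro V hV
    have hnn : ∀ i ∈ Finset.range N,
        0 ≤ (extCtrl V i - PhiF d A B R P Δ s₀ i (stateTraj A B x0 (extCtrl V) i)) ⬝ᵥ
          (TmF d B R P i *ᵥ
            (extCtrl V i - PhiF d A B R P Δ s₀ i (stateTraj A B x0 (extCtrl V) i))) := by
      intro i hi
      have hiN : i < N := Finset.mem_range.mp hi
      have h := (hTpos i hiN).posSemidef.dotProduct_mulVec_nonneg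
        (extCtrl V i - PhiF d A B R P Δ s₀ i (stateTraj A B x0 (extCtrl V) i))
      simpa using h
    have hex : ∃ i : ℕ, i < N ∧ extCtrl V i ≠ extCtrl Us i := by
      by_contra hcon
      push_neg at hcon
      apply hV
      funext k
      have := hcon ↑k k.isLt
      rwa [extCtrl_fin, extCtrl_fin] at this
    set k₀ := Nat.find hex with hk₀def
    obtain ⟨hk₀N, hk₀ne⟩ := Nat.find_spec hex
    have hmin : ∀ j < k₀, extCtrl V j = extCtrl Us j := by
      intro j hj
      have h := Nat.find_min hex hj
      push_neg at h
      exact h (lt_trans hj hk₀N)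
    have hζeq : stateTraj A B x0 (extCtrl V) k₀ = stateTraj A B x0 (extCtrl Us) k₀ :=
      stateTraj_congr A B x0 _ _ k₀ hmin
    have hΦUs : PhiF d A B R P Δ s₀ k₀ (stateTraj A B x0 (extCtrl Us) k₀)
        = extCtrl Us k₀ := by
      rw [extCtrl_lt Us k₀ hk₀N, hUs, hζUs k₀ (le_of_lt hk₀N), hΦ₀]
    have hvne : extCtrl V k₀ - PhiF d A B R P Δ s₀ k₀ (stateTraj A B x0 (extCtrl V) k₀) ≠ 0 := by
      rw [hζeq, hΦUs]
      exact sub_ne_zero.mpr hk₀ne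
    have hpos : 0 < (extCtrl V k₀ - PhiF d A B R P Δ s₀ k₀ (stateTraj A B x0 (extCtrl V) k₀)) ⬝ᵥ
        (TmF d B R P k₀ *ᵥ
          (extCtrl V k₀ - PhiF d A B R P Δ s₀ k₀ (stateTraj A B x0 (extCtrl V) k₀))) := by
      have h := (hTpos k₀ hk₀N).dotProduct_mulVec_pos hvne
      simpa using h
    have hsumpos : 0 < ∑ i ∈ Finset.range N,
        (extCtrl V i - PhiF d A B R P Δ s₀ i (stateTraj A B x0 (extCtrl V) i)) ⬝ᵥ
          (TmF d B R P i *ᵥ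
            (extCtrl V i - PhiF d A B R P Δ s₀ i (stateTraj A B x0 (extCtrl V) i))) :=
      Finset.sum_pos' hnn ⟨k₀, Finset.mem_range.mpr hk₀N, hpos⟩
    rw [hcost V, hUscost]
    linarith
  · -- the feedback formula
    intro k
    have hζ : stateTraj A B x0 (extCtrl Us) ↑k = fbTraj A B x0 Φ₀ ↑k :=
      hζUs ↑k (le_of_lt k.isLt)
    have hUsk : Us k = d • (KfF d A B R P ↑k *ᵥ stateTraj A B x0 (extCtrl Us) ↑k)
        + GfF d B R P Δ ↑k *ᵥ s₀ := by
      rw [hUs, hζ]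
      rfl
    rw [hUsk]
    have hGs : GfF d B R P Δ ↑k *ᵥ s₀ = ∑ j, a j • (GfF d B R P Δ ↑k *ᵥ x j) := by
      rw [hs₀def, show (GfF d B R P Δ ↑k) *ᵥ (∑ j, a j • x j)
          = (GfF d B R P Δ ↑k).mulVecLin (∑ j, a j • x j) from rfl, map_sum]
      simp [Matrix.mulVecLin_apply, Matrix.mulVec_smul]
    rw [hGs]
    have hrhs : ∑ j, a j •
        (KfF d A B R P ↑k *ᵥ stateTraj A B x0 (extCtrl Us) ↑k + GfF d B R P Δ ↑k *ᵥ x j)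
        = (∑ j, a j) • (KfF d A B R P ↑k *ᵥ stateTraj A B x0 (extCtrl Us) ↑k)
          + ∑ j, a j • (GfF d B R P Δ ↑k *ᵥ x j) := by
      simp only [smul_add]
      rw [Finset.sum_add_distrib, ← Finset.sum_smul]
    rw [show ∑ j, a j •
        ((-(R⁻¹ * Bᵀ * (1 + d • (P ((k:ℕ) + 1) * B * R⁻¹ * Bᵀ))⁻¹ * P ((k:ℕ) + 1) * A))
            *ᵥ stateTraj A B x0 (extCtrl Us) ↑k +
          (-(R⁻¹ * Bᵀ * (1 + d • (P ((k:ℕ) + 1) * B * R⁻¹ * Bᵀ))⁻¹ * Δ ((k:ℕ) + 1))) *ᵥ x j)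
        = ∑ j, a j •
        (KfF d A B R P ↑k *ᵥ stateTraj A B x0 (extCtrl Us) ↑k + GfF d B R P Δ ↑k *ᵥ x j)
      from rfl, hrhs, ← hd]
end

section
/- Fix weights a_1,…,a_M ∈ {0,1} with d = Σ_{j=1}^M a_j ≥ 1, target vectors x_1,…,x_M ∈ ℝⁿ, and an initial state x₀ ∈ ℝⁿ. Suppose sequences x̂*(0),…,x̂*(N) ∈ ℝⁿ, û*(0),…,û*(N−1) ∈ ℝᵐ and multipliers λ(1),…,λ(N) ∈ ℝⁿ satisfy the KKT conditions: x̂*(0) = x₀; x̂*(n+1) = A x̂*(n) + B û*(n) for n = 0,…,N−1; R û*(n) + Bᵀλ(n+1) = 0 for n = 0,…,N−1; λ(n) = Σ_{j=1}^M a_j Q (x̂*(n) − x_j) + Aᵀλ(n+1) for n = 1,…,N−1; and λ(N) = Σ_{j=1}^M a_j Q_N (x̂*(N) − x_j). Then λ(n) = Σ_{j=1}^M a_j [P(n) x̂*(n) + Δ(n) x_j] for all n = 1,…,N, where P, Δ are the backward matrix recursions P(n) = Aᵀ(I + d·P(n+1)BR⁻¹Bᵀ)⁻¹P(n+1)A +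 Q with P(N) = Q_N, and Δ(n) = Aᵀ(I + d·P(n+1)BR⁻¹Bᵀ)⁻¹Δ(n+1) − Q with Δ(N) = −Q_N. -/
open Matrix Polynomial

lemma psd_smul {n : ℕ} {M : Matrix (Fin n) (Fin n) ℝ} (h : M.PosSemidef) {c : ℝ} (hc : 0 ≤ c) :
    (c • M).PosSemidef := by
  refine ⟨?_, fun x => ?_⟩
  · unfold Matrix.IsHermitian
    rw [conjTranspose_smul, h.1.eq]
    simp
  · exact (h.smul hc).2 x

lemma mulVec_sum' {n M : ℕ} (A : Matrix (Fin n) (Fin n) ℝ) (f : Fin M → Fin n → ℝ) :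
    A *ᵥ (∑ j, f j) = ∑ j, A *ᵥ f j :=
  map_sum A.mulVecLin f Finset.univ

theorem stmt2 (n m M N : ℕ) (hN : 1 ≤ N)
    (A : Matrix (Fin n) (Fin n) ℝ) (B : Matrix (Fin n) (Fin m) ℝ)
    (Q QN : Matrix (Fin n) (Fin n) ℝ) (R : Matrix (Fin m) (Fin m) ℝ)
    (hQ : Q.PosDef) (hQN : QN.PosDef) (hR : R.PosDef)
    (a : Fin M → ℝ) (ha : ∀ j, a j = 0 ∨ a j = 1)
    (d : ℝ) (hd : d = ∑ j, a j) (hd1 : 1 ≤ d)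
    (x : Fin M → Fin n → ℝ) (x0 : Fin n → ℝ)
    (xhat : ℕ → Fin n → ℝ) (uhat : ℕ → Fin m → ℝ) (lam : ℕ → Fin n → ℝ)
    -- KKT conditions
    (hx0 : xhat 0 = x0)
    (hdyn : ∀ k < N, xhat (k + 1) = A *ᵥ xhat k + B *ᵥ uhat k)
    (hstat : ∀ k < N, R *ᵥ uhat k + Bᵀ *ᵥ lam (k + 1) = 0)
    (hadj : ∀ k, 1 ≤ k → k < N →
      lam k = (∑ j, a j • (Q *ᵥ (xhat k - x j))) + Aᵀ *ᵥ lam (k + 1))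
    (hterm : lam N = ∑ j, a j • (QN *ᵥ (xhat N - x j)))
    -- backward matrix recursions
    (P Δ : ℕ → Matrix (Fin n) (Fin n) ℝ)
    (hPN : P N = QN)
    (hPrec : ∀ k < N,
      P k = Aᵀ * (1 + d • (P (k + 1) * B * R⁻¹ * Bᵀ))⁻¹ * P (k + 1) * A + Q)
    (hΔN : Δ N = -QN)
    (hΔrec : ∀ k < N,
      Δ k = Aᵀ * (1 + d • (P (k + 1) * B * R⁻¹ * Bᵀ))⁻¹ * Δ (k + 1) - Q) :
    ∀ k, 1 ≤ k → k ≤ N →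
      lam k = ∑ j, a j • (P k *ᵥ xhat k + Δ k *ᵥ x j) := by
  have hd0 : (0:ℝ) ≤ d := le_trans zero_le_one hd1
  have hRdet : IsUnit R.det := (Matrix.isUnit_iff_isUnit_det R).mp hR.isUnit
  -- B * R⁻¹ * Bᵀ is positive semidefinite
  have hMpsd : (B * R⁻¹ * Bᵀ).PosSemidef := by
    have := hR.inv.posSemidef.mul_mul_conjTranspose_same B
    rwa [conjTranspose_eq_transpose_of_trivial] at this
  -- the key factorization and posdef facts
  have hfact : ∀ k, (P (k+1)).PosDef →
      (1 + d • (P (k + 1) * B * R⁻¹ * Bᵀ)) =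
        P (k+1) * ((P (k+1))⁻¹ + d • (B * R⁻¹ * Bᵀ)) := by
    intro k hPn
    have hPdet : IsUnit (P (k+1)).det := (Matrix.isUnit_iff_isUnit_det _).mp hPn.isUnit
    rw [Matrix.mul_add, Matrix.mul_nonsing_inv _ hPdet, Matrix.mul_smul, Matrix.mul_assoc,
      Matrix.mul_assoc, Matrix.mul_assoc]
  have hWpos : ∀ k, (P (k+1)).PosDef →
      ((P (k+1))⁻¹ + d • (B * R⁻¹ * Bᵀ)).PosDef :=
    fun k hPn => hPn.inv.add_posSemidef (psd_smul hMpsd hd0)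
  -- inverse of the factor applied to P (k+1)
  have hSinv : ∀ k, (P (k+1)).PosDef →
      (1 + d • (P (k + 1) * B * R⁻¹ * Bᵀ))⁻¹ * P (k+1) =
        ((P (k+1))⁻¹ + d • (B * R⁻¹ * Bᵀ))⁻¹ := by
    intro k hPn
    have hPdet : IsUnit (P (k+1)).det := (Matrix.isUnit_iff_isUnit_det _).mp hPn.isUnit
    rw [hfact k hPn, Matrix.mul_inv_rev, Matrix.mul_assoc,
      Matrix.nonsing_inv_mul _ hPdet, Matrix.mul_one]
  -- P k is positive definite for all k ≤ N
  have hPpos : ∀ t k, k + t = N → (P k).PosDef := by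
    intro t
    induction t with
    | zero => intro k hk; simp only [Nat.add_zero] at hk; rw [hk, hPN]; exact hQN
    | succ t ih =>
      intro k hk
      have hk' : k < N := by omega
      have hPn : (P (k+1)).PosDef := ih (k+1) (by omega)
      have hW := hWpos k hPn
      rw [hPrec k hk', Matrix.mul_assoc Aᵀ _ (P (k+1)), hSinv k hPn]
      have hpsd : (Aᵀ * ((P (k+1))⁻¹ + d • (B * R⁻¹ * Bᵀ))⁻¹ * A).PosSemidef := by
        have := hW.inv.posSemidef.conjTranspose_mul_mul_same A
        rwa [conjTranspose_eq_transpose_of_trivial] at this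
      exact Matrix.PosDef.posSemidef_add hpsd hQ
  have key : ∀ t k, k + t = N → 1 ≤ k →
      lam k = ∑ j, a j • (P k *ᵥ xhat k + Δ k *ᵥ x j) := by
    intro t
    induction t with
    | zero =>
      intro k hk _
      simp only [Nat.add_zero] at hk
      subst hk
      rw [hterm, hPN, hΔN]
      refine Finset.sum_congr rfl fun j _ => ?_
      rw [Matrix.mulVec_sub, Matrix.neg_mulVec, sub_eq_add_neg]
    | succ t ih =>
      intro k hk hk1
      have hk' : k < N := by omega
      have hPn : (P (k+1)).PosDef := hPpos t (k+1) (by omega)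
      have hW := hWpos k hPn
      have hPdet : IsUnit (P (k+1)).det := (Matrix.isUnit_iff_isUnit_det _).mp hPn.isUnit
      have hWdet : IsUnit ((P (k+1))⁻¹ + d • (B * R⁻¹ * Bᵀ)).det :=
        (Matrix.isUnit_iff_isUnit_det _).mp hW.isUnit
      have hSdet : IsUnit (1 + d • (P (k + 1) * B * R⁻¹ * Bᵀ)).det := by
        rw [hfact k hPn, Matrix.det_mul]; exact hPdet.mul hWdet
      have ih1 := ih (k+1) (by omega) (by omega)
      -- control input
      have hu : uhat k = -((R⁻¹ * Bᵀ) *ᵥ lam (k+1)) := by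
        have h2 : R *ᵥ uhat k = -(Bᵀ *ᵥ lam (k+1)) := eq_neg_of_add_eq_zero_left (hstat k hk')
        have h3 := congrArg (fun v => R⁻¹ *ᵥ v) h2
        simpa [Matrix.mulVec_mulVec, Matrix.nonsing_inv_mul _ hRdet, Matrix.one_mulVec,
          Matrix.mulVec_neg] using h3
      have hx1' : xhat (k+1) = A *ᵥ xhat k - (B * R⁻¹ * Bᵀ) *ᵥ lam (k+1) := by
        rw [hdyn k hk', hu, Matrix.mulVec_neg, Matrix.mulVec_mulVec, sub_eq_add_neg,
          ← Matrix.mul_assoc]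
      have hsum : lam (k+1) = d • (P (k+1) *ᵥ xhat (k+1)) + ∑ j, a j • (Δ (k+1) *ᵥ x j) := by
        rw [ih1]
        simp only [smul_add, Finset.sum_add_distrib, ← Finset.sum_smul, ← hd]
      have expand : lam (k+1) = d • ((P (k+1) * A) *ᵥ xhat k)
          - d • ((P (k+1) * B * R⁻¹ * Bᵀ) *ᵥ lam (k+1))
          + ∑ j, a j • (Δ (k+1) *ᵥ x j) := by
        nth_rewrite 1 [hsum]
        rw [hx1', Matrix.mulVec_sub, smul_sub, Matrix.mulVec_mulVec, Matrix.mulVec_mulVec]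
        simp only [Matrix.mul_assoc]
      have hSlam : (1 + d • (P (k + 1) * B * R⁻¹ * Bᵀ)) *ᵥ lam (k+1)
          = d • ((P (k+1) * A) *ᵥ xhat k) + ∑ j, a j • (Δ (k+1) *ᵥ x j) := by
        rw [Matrix.add_mulVec, Matrix.one_mulVec, Matrix.smul_mulVec]
        nth_rewrite 1 [expand]
        abel
      have hlam1 : lam (k+1) = (1 + d • (P (k + 1) * B * R⁻¹ * Bᵀ))⁻¹ *ᵥ
          (d • ((P (k+1) * A) *ᵥ xhat k) + ∑ j, a j • (Δ (k+1) *ᵥ x j)) := by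
        rw [← hSlam, Matrix.mulVec_mulVec, Matrix.nonsing_inv_mul _ hSdet, Matrix.one_mulVec]
      rw [hadj k hk1 hk', hlam1, hPrec k hk', hΔrec k hk']
      simp only [Matrix.mulVec_sub, Matrix.mulVec_add, Matrix.add_mulVec, Matrix.sub_mulVec,
        smul_add, smul_sub, Finset.sum_add_distrib, Finset.sum_sub_distrib,
        Matrix.mulVec_mulVec, Matrix.mulVec_smul, mulVec_sum', ← Finset.sum_smul, ← hd,
        Matrix.mul_assoc]
      abel
  intro k h1 h2
  exact key (N - k) k (by omega) h1
end

section
/- Assume every vertex of the digraph has in-degree d_i ≥ 1, and let Γ = diag(1/d_1,…,1/d_M)·ℒ. If the digraph contains a spanning tree, then the row sums of the normalized adjacency matrix diag(1/d_1,…,1/d_M)·𝒜 all equal 1, Γ·𝟏 = 0, and 0 is a simple eigenvalue of Γ (algebraic multiplicity exactly 1 in the characteristic polynomial of Γ). -/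
open Matrix Polynomial

theorem stmt3 (M : ℕ) (hM : 0 < M)
    (Adj : Matrix (Fin M) (Fin M) ℝ)
    (hA01 : ∀ i j, Adj i j = 0 ∨ Adj i j = 1)
    (hdiag : ∀ i, Adj i i = 0)
    (d : Fin M → ℝ) (hd : ∀ i, d i = ∑ j, Adj i j) (hdeg : ∀ i, 1 ≤ d i)
    (Γ : Matrix (Fin M) (Fin M) ℝ)
    (hΓ : Γ = Matrix.diagonal (fun i => (d i)⁻¹) * (Matrix.diagonal d - Adj))
    (hspan : ContainsSpanningTree Adj) :
    (∀ i, ∑ j, (Matrix.diagonal (fun i => (d i)⁻¹) * Adj) i j = 1) ∧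
      Γ *ᵥ (fun _ => (1 : ℝ)) = 0 ∧
      Polynomial.rootMultiplicity 0 Γ.charpoly = 1 := by
  have hdne : ∀ i, d i ≠ 0 := fun i => by have := hdeg i; linarith
  have hdpos : ∀ i, 0 < d i := fun i => by have := hdeg i; linarith
  have hA0 : ∀ i j, 0 ≤ Adj i j := by
    intro i j; rcases hA01 i j with h | h <;> rw [h] <;> norm_num
  -- entrywise formula for Γ *ᵥ x
  have key : ∀ (x : Fin M → ℝ) (i : Fin M),
      (Γ *ᵥ x) i = x i - (d i)⁻¹ * ∑ j, Adj i j * x j := by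
    intro x i
    have hent : ∀ j, Γ i j = (d i)⁻¹ * ((if i = j then d i else 0) - Adj i j) := by
      intro j
      rw [hΓ, Matrix.diagonal_mul, Matrix.sub_apply, Matrix.diagonal_apply]
    simp only [mulVec, dotProduct, hent]
    have expand : ∀ j, (d i)⁻¹ * ((if i = j then d i else 0) - Adj i j) * x j
        = (d i)⁻¹ * (if i = j then d i * x j else 0) - (d i)⁻¹ * (Adj i j * x j) := by
      intro j; split <;> ring
    rw [Finset.sum_congr rfl fun j _ => expand j, Finset.sum_sub_distrib,
      ← Finset.mul_sum, ← Finset.mul_sum,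
      Finset.sum_ite_eq Finset.univ i (fun j => d i * x j)]
    simp only [Finset.mem_univ, if_true]
    rw [← mul_assoc, inv_mul_cancel₀ (hdne i), one_mul]
  -- part 1
  have part1 : ∀ i, ∑ j, (Matrix.diagonal (fun i => (d i)⁻¹) * Adj) i j = 1 := by
    intro i
    have : ∀ j, (Matrix.diagonal (fun i => (d i)⁻¹) * Adj) i j = (d i)⁻¹ * Adj i j := by
      intro j; rw [Matrix.diagonal_mul]
    rw [Finset.sum_congr rfl (fun j _ => this j), ← Finset.mul_sum, ← hd i,
      inv_mul_cancel₀ (hdne i)]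
  -- part 2
  have part2 : Γ *ᵥ (fun _ => (1 : ℝ)) = 0 := by
    funext i
    rw [key]
    simp only [mul_one, ← hd i, Pi.zero_apply]
    rw [inv_mul_cancel₀ (hdne i)]
    ring
  refine ⟨part1, part2, ?_⟩
  -- part 3
  obtain ⟨r, hr⟩ := hspan
  -- any vector in the kernel of Γ is constant
  have hconst : ∀ x : Fin M → ℝ, Γ *ᵥ x = 0 → ∀ i, x i = x r := by
    intro x hx
    have hxe : ∀ i, d i * x i = ∑ j, Adj i j * x j := by
      intro i
      have h := congrFun hx i
      rw [key] at h
      simp only [Pi.zero_apply, sub_eq_zero] at h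
      calc d i * x i = d i * ((d i)⁻¹ * ∑ j, Adj i j * x j) := by rw [← h]
        _ = ∑ j, Adj i j * x j := by
            rw [← mul_assoc, mul_inv_cancel₀ (hdne i), one_mul]
    -- maximum propagates backwards along edges
    have back : ∀ (i : Fin M), (∀ k, x k ≤ x i) →
        ∀ j, Adj i j = 1 → x j = x i := by
      intro i hi j hj
      have hle : ∀ k ∈ Finset.univ, Adj i k * x k ≤ Adj i k * x i := by
        intro k _
        exact mul_le_mul_of_nonneg_left (hi k) (hA0 i k)
      have hsum : ∑ k, Adj i k * x k = ∑ k, Adj i k * x i := by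
        rw [← hxe i, ← Finset.sum_mul, ← hd i, mul_comm]
      have := (Finset.sum_eq_sum_iff_of_le hle).mp hsum j (Finset.mem_univ j)
      rw [hj, one_mul, one_mul] at this
      exact this
    -- similarly the minimum
    have back' : ∀ (i : Fin M), (∀ k, x i ≤ x k) →
        ∀ j, Adj i j = 1 → x j = x i := by
      intro i hi j hj
      have hle : ∀ k ∈ Finset.univ, Adj i k * x i ≤ Adj i k * x k := by
        intro k _
        exact mul_le_mul_of_nonneg_left (hi k) (hA0 i k)
      have hsum : ∑ k, Adj i k * x i = ∑ k, Adj i k * x k := by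
        rw [← hxe i, ← Finset.sum_mul, ← hd i, mul_comm]
      have := (Finset.sum_eq_sum_iff_of_le hle).mp hsum j (Finset.mem_univ j)
      rw [hj, one_mul, one_mul] at this
      exact this.symm
    obtain ⟨imax, -, hmax⟩ := Finset.exists_max_image Finset.univ x ⟨⟨0, hM⟩, Finset.mem_univ _⟩
    obtain ⟨imin, -, hmin⟩ := Finset.exists_min_image Finset.univ x ⟨⟨0, hM⟩, Finset.mem_univ _⟩
    have hmax' : ∀ k, x k ≤ x imax := fun k => hmax k (Finset.mem_univ k)
    have hmin' : ∀ k, x imin ≤ x k := fun k => hmin k (Finset.mem_univ k)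
    -- propagate max from imax backwards to r
    have hrmax : ∀ a : Fin M, Relation.ReflTransGen (fun u v => Adj v u = 1) a imax →
        x a = x imax := by
      intro a h
      induction h using Relation.ReflTransGen.head_induction_on with
      | refl => rfl
      | head hab _ ih =>
        rename_i a' c _
        rw [← ih]
        exact (back c (by rw [ih]; exact hmax') a' hab)
    have hrmin : ∀ a : Fin M, Relation.ReflTransGen (fun u v => Adj v u = 1) a imin →
        x a = x imin := by
      intro a h
      induction h using Relation.ReflTransGen.head_induction_on with
      | refl => rfl
      | head hab _ ih =>
        rename_i a' c _
        rw [← ih]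
        exact (back' c (by rw [ih]; exact hmin') a' hab)
    intro i
    have h1 := hmax' i
    have h2 := hmin' i
    have e1 : x r = x imax := hrmax r (hr imax)
    have e2 : x r = x imin := hrmin r (hr imin)
    linarith
  -- no vector maps to the all-ones vector
  have hno1 : ∀ y : Fin M → ℝ, Γ *ᵥ y ≠ (fun _ => (1 : ℝ)) := by
    intro y hy
    obtain ⟨i, -, hi⟩ := Finset.exists_min_image Finset.univ y ⟨⟨0, hM⟩, Finset.mem_univ _⟩
    have h := congrFun hy i
    rw [key] at h
    have hsum : d i * y i ≤ ∑ j, Adj i j * y j := by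
      calc d i * y i = ∑ j, Adj i j * y i := by rw [← Finset.sum_mul, ← hd i, mul_comm]
        _ ≤ ∑ j, Adj i j * y j :=
          Finset.sum_le_sum fun j _ =>
            mul_le_mul_of_nonneg_left (hi j (Finset.mem_univ j)) (hA0 i j)
    have hinv : 0 < (d i)⁻¹ := inv_pos.mpr (hdpos i)
    have : y i ≤ (d i)⁻¹ * ∑ j, Adj i j * y j := by
      calc y i = (d i)⁻¹ * (d i * y i) := by
            rw [← mul_assoc, inv_mul_cancel₀ (hdne i), one_mul]
        _ ≤ (d i)⁻¹ * ∑ j, Adj i j * y j := by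
            exact mul_le_mul_of_nonneg_left hsum (le_of_lt hinv)
    linarith
  -- set up the endomorphism
  set φ : Module.End ℝ (Fin M → ℝ) := Matrix.toLin' Γ with hφdef
  have hφapp : ∀ x, φ x = Γ *ᵥ x := fun x => Matrix.toLin'_apply Γ x
  have hone : (fun _ : Fin M => (1 : ℝ)) ≠ 0 := by
    intro h
    have := congrFun h ⟨0, hM⟩
    norm_num at this
  -- the kernel of φ is spanned by the all-ones vector
  have hkerφ : LinearMap.ker φ = Submodule.span ℝ {fun _ : Fin M => (1 : ℝ)} := by
    apply le_antisymm
    · intro x hx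
      rw [LinearMap.mem_ker, hφapp] at hx
      have : x = x r • (fun _ : Fin M => (1 : ℝ)) := by
        funext i
        simp [hconst x hx i]
      rw [this]
      exact Submodule.smul_mem _ _ (Submodule.mem_span_singleton_self _)
    · rw [Submodule.span_le, Set.singleton_subset_iff]
      rw [SetLike.mem_coe, LinearMap.mem_ker, hφapp]
      exact part2
  -- kernel of φ² equals kernel of φ
  have hker2 : ∀ x : Fin M → ℝ, φ (φ x) = 0 → φ x = 0 := by
    intro x hx
    have : φ x ∈ LinearMap.ker φ := LinearMap.mem_ker.mpr hx
    rw [hkerφ, Submodule.mem_span_singleton] at this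
    obtain ⟨c, hc⟩ := this
    rcases eq_or_ne c 0 with h0 | h0
    · rw [← hc, h0, zero_smul]
    · exfalso
      apply hno1 (c⁻¹ • x)
      rw [← hφapp, LinearMap.map_smul, ← hc]
      funext i
      simp [smul_smul, inv_mul_cancel₀ h0]
  have hkerpow : ∀ n : ℕ, LinearMap.ker (φ ^ n) ≤ LinearMap.ker φ := by
    intro n
    induction n with
    | zero =>
      intro x hx
      rw [LinearMap.mem_ker, pow_zero, Module.End.one_apply] at hx
      simp [LinearMap.mem_ker, hx]
    | succ n ih =>
      intro x hx
      rw [LinearMap.mem_ker, pow_succ, Module.End.mul_apply] at hx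
      have h1 : φ x ∈ LinearMap.ker φ := ih (LinearMap.mem_ker.mpr hx)
      rw [LinearMap.mem_ker] at h1 ⊢
      exact hker2 x h1
  have hiSup : (⨆ n : ℕ, LinearMap.ker (φ ^ n)) = LinearMap.ker φ := by
    apply le_antisymm
    · exact iSup_le hkerpow
    · have := le_iSup (fun n : ℕ => LinearMap.ker (φ ^ n)) 1
      rwa [pow_one] at this
  have hV : φ.maxGenEigenspace 0 = ⨆ n : ℕ, LinearMap.ker (φ ^ n) := by
    simp [← Module.End.iSup_genEigenspace_eq, Module.End.genEigenspace_nat]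
  -- finrank of the max generalized eigenspace is 1
  have hfin : Module.finrank ℝ (φ.maxGenEigenspace 0) = 1 := by
    rw [hV, hiSup, hkerφ]
    exact finrank_span_singleton hone
  -- relate matrix charpoly and linear map charpoly
  have hcp : Γ.charpoly = φ.charpoly := by
    rw [← LinearMap.charpoly_toMatrix φ (Pi.basisFun ℝ (Fin M)),
      LinearMap.toMatrix_eq_toMatrix', hφdef, LinearMap.toMatrix'_toLin']
  rw [hcp, Polynomial.rootMultiplicity_eq_natTrailingDegree',
    ← LinearMap.finrank_maxGenEigenspace_zero_eq, hfin]
end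

section
/- Let X, Y ∈ ℂ^{n×n} and W ∈ ℂ^{p×p}. Then z ∈ ℂ is an eigenvalue of the np×np matrix I_p ⊗ X + W ⊗ Y if and only if there exists an eigenvalue μ of W such that z is an eigenvalue of X + μY. -/
set_option maxHeartbeats 1000000

open Matrix Polynomial Kronecker


lemma charpoly_conj' {m : Type*} [Fintype m] [DecidableEq m] {R : Type*} [CommRing R]
    (P M : Matrix m m R) [Invertible P] :
    (P * M * ⅟P).charpoly = M.charpoly := by
  have hmap : ∀ A B : Matrix m m R, (C : R →+* R[X]).mapMatrix (A * B)
      = (C : R →+* R[X]).mapMatrix A * (C : R →+* R[X]).mapMatrix B := fun A B => map_mul _ A B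
  have h1 : ((C : R →+* R[X]).mapMatrix P) * (C : R →+* R[X]).mapMatrix (⅟P) = 1 := by
    rw [← hmap, mul_invOf_self]; simp
  have key : charmatrix (P * M * ⅟P)
      = (C : R →+* R[X]).mapMatrix P * charmatrix M * (C : R →+* R[X]).mapMatrix (⅟P) := by
    unfold charmatrix
    rw [mul_sub, sub_mul, hmap, hmap]
    congr 1
    rw [mul_assoc, (scalar_commute (X : R[X]) (Commute.all _) _).eq, ← mul_assoc, h1, one_mul]
  rw [Matrix.charpoly, key, det_mul, det_mul]
  have h2 : ((C : R →+* R[X]).mapMatrix P).det * ((C : R →+* R[X]).mapMatrix (⅟P)).det = 1 := by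
    rw [← det_mul, h1, det_one]
  calc ((C : R →+* R[X]).mapMatrix P).det * (charmatrix M).det * ((C : R →+* R[X]).mapMatrix (⅟P)).det
      = ((C : R →+* R[X]).mapMatrix P).det * ((C : R →+* R[X]).mapMatrix (⅟P)).det * (charmatrix M).det := by ring
    _ = (charmatrix M).det := by rw [h2, one_mul]


lemma exists_triangular : ∀ (p : ℕ) (W : Matrix (Fin p) (Fin p) ℂ),
    ∃ T P Q : Matrix (Fin p) (Fin p) ℂ,
      P * Q = 1 ∧ Q * P = 1 ∧ W = P * T * Q ∧ ∀ i j : Fin p, j < i → T i j = 0 := by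
  intro p
  induction p with
  | zero =>
    intro W
    exact ⟨W, 1, 1, by simp, by simp, by simp, fun i => i.elim0⟩
  | succ p ih =>
    intro W
    -- eigenvector
    obtain ⟨μ, hμ⟩ := Module.End.exists_eigenvalue (Matrix.mulVecLin W)
    obtain ⟨v, hv⟩ := hμ.exists_hasEigenvector
    have hWv : W *ᵥ v = μ • v := by simpa using hv.apply_eq_smul
    obtain ⟨i, hi⟩ : ∃ i, v i ≠ 0 := by
      by_contra h
      push_neg at h
      exact hv.right (funext h)
    -- step 1: make column i equal to μ e_i
    set P₀ : Matrix (Fin (p+1)) (Fin (p+1)) ℂ := (1 : Matrix _ _ ℂ).updateCol i v with hP₀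
    have hdet : P₀.det = v i := by rw [hP₀, ← cramer_apply, cramer_one]; rfl
    have : Invertible P₀ := P₀.invertibleOfIsUnitDet (by rw [hdet]; exact isUnit_iff_ne_zero.mpr hi)
    set M₁ := ⅟P₀ * W * P₀ with hM₁
    have hcol : ∀ x, M₁ x i = if x = i then μ else 0 := by
      intro x
      have h1 : P₀ *ᵥ (Pi.single i 1 : Fin (p+1) → ℂ) = v := by
        ext k
        simp [hP₀, Matrix.mulVec_single, Matrix.updateCol_apply]
      have h2 : M₁ *ᵥ (Pi.single i 1 : Fin (p+1) → ℂ) = μ • (Pi.single i 1 : Fin (p+1) → ℂ) := by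
        rw [hM₁, ← Matrix.mulVec_mulVec, ← Matrix.mulVec_mulVec, h1, hWv,
          Matrix.mulVec_smul, ← h1, Matrix.mulVec_mulVec, invOf_mul_self, Matrix.one_mulVec]
      have := congrFun h2 x
      simpa [Matrix.mulVec_single, Pi.single_apply] using this
    -- step 2: swap 0 and i
    set e : Fin (p+1) ≃ Fin (p+1) := Equiv.swap 0 i with he
    set M₂ := M₁.submatrix e e with hM₂def
    have hcol2 : ∀ x, M₂ x 0 = if x = 0 then μ else 0 := by
      intro x
      have : M₂ x 0 = M₁ (e x) i := by rw [hM₂def]; simp [he, Matrix.submatrix_apply, Equiv.swap_apply_left]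
      rw [this, hcol]
      congr 1
      simp only [eq_iff_iff]
      constructor
      · intro hx
        have : e x = e 0 := by rw [hx, he]; simp [Equiv.swap_apply_left]
        exact e.injective this
      · intro hx; rw [hx, he]; simp [Equiv.swap_apply_left]
    -- similarity for M₁ = Pe * M₂ * Qe
    set Pe : Matrix (Fin (p+1)) (Fin (p+1)) ℂ := (1 : Matrix _ _ ℂ).submatrix id ⇑e with hPe
    set Qe : Matrix (Fin (p+1)) (Fin (p+1)) ℂ := (1 : Matrix _ _ ℂ).submatrix ⇑e id with hQe
    have hPeQe : Pe * Qe = 1 := by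
      rw [hPe, hQe, Matrix.submatrix_mul_equiv (1 : Matrix _ _ ℂ) (1 : Matrix _ _ ℂ) id e id]
      simp
    have hQePe : Qe * Pe = 1 := by
      rw [hQe, hPe]
      have := Matrix.submatrix_mul_equiv (1 : Matrix (Fin (p+1)) (Fin (p+1)) ℂ) (1 : Matrix _ _ ℂ) ⇑e (Equiv.refl _) ⇑e
      simp only [Equiv.coe_refl] at this
      rw [show ((1 : Matrix _ _ ℂ).submatrix ⇑e id) = ((1 : Matrix _ _ ℂ).submatrix ⇑e ⇑(Equiv.refl (Fin (p+1)))) from rfl] at *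
      rw [this]
      simp [Matrix.submatrix_one_equiv]
    have hM₁M₂ : M₁ = Pe * M₂ * Qe := by
      rw [hPe, hM₂def, Matrix.submatrix_mul_equiv (1 : Matrix _ _ ℂ) M₁ id e ⇑e, hQe]
      rw [Matrix.submatrix_mul_equiv ((1 : Matrix _ _ ℂ) * M₁) (1 : Matrix _ _ ℂ) id e id]
      simp
    -- step 3: move to sum type
    set ε : Fin 1 ⊕ Fin p ≃ Fin (p+1) :=
      (finSumFinEquiv : Fin 1 ⊕ Fin p ≃ Fin (1+p)).trans (finCongr (Nat.add_comm 1 p)) with hε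
    have hεl : ∀ a : Fin 1, ε (Sum.inl a) = 0 := by
      intro a
      have : a = 0 := Subsingleton.elim _ _
      subst this
      rfl
    have hεr : ∀ b : Fin p, (ε (Sum.inr b)).val = 1 + b.val := by
      intro b; rfl
    set N := M₂.submatrix ⇑ε ⇑ε with hNdef
    have hN21 : N.toBlocks₂₁ = 0 := by
      ext b a
      have ha : a = 0 := Subsingleton.elim _ _
      subst ha
      show N (Sum.inr b) (Sum.inl 0) = 0
      rw [hNdef]
      simp only [Matrix.submatrix_apply]
      rw [hεl 0, hcol2]
      have : ε (Sum.inr b) ≠ 0 := by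
        intro h
        have := congrArg Fin.val h
        rw [hεr, Fin.val_zero] at this
        omega
      simp [this]
    obtain ⟨T', P', Q', hPQ', hQP', hA', hT'⟩ := ih N.toBlocks₂₂
    set S : Matrix (Fin 1 ⊕ Fin p) (Fin 1 ⊕ Fin p) ℂ := Matrix.fromBlocks 1 0 0 P' with hS
    set Sinv : Matrix (Fin 1 ⊕ Fin p) (Fin 1 ⊕ Fin p) ℂ := Matrix.fromBlocks 1 0 0 Q' with hSinv
    have hSS : S * Sinv = 1 := by
      rw [hS, hSinv, Matrix.fromBlocks_multiply]
      simp [hPQ', Matrix.fromBlocks_one]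
    have hSS' : Sinv * S = 1 := by
      rw [hS, hSinv, Matrix.fromBlocks_multiply]
      simp [hQP', Matrix.fromBlocks_one]
    set Tsum : Matrix (Fin 1 ⊕ Fin p) (Fin 1 ⊕ Fin p) ℂ :=
      Matrix.fromBlocks N.toBlocks₁₁ (N.toBlocks₁₂ * P') 0 T' with hTsum
    have hNsim : N = S * Tsum * Sinv := by
      rw [hS, hSinv, hTsum, Matrix.fromBlocks_multiply, Matrix.fromBlocks_multiply]
      simp only [Matrix.one_mul, Matrix.mul_one, Matrix.zero_mul, Matrix.mul_zero,
        add_zero, zero_add, Matrix.mul_assoc]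
      rw [hPQ', Matrix.mul_one, ← Matrix.mul_assoc P' T' Q', ← hA', ← hN21]
      exact (Matrix.fromBlocks_toBlocks N).symm
    -- transport back along ε
    set T : Matrix (Fin (p+1)) (Fin (p+1)) ℂ := Tsum.submatrix ⇑ε.symm ⇑ε.symm with hT
    set Sd : Matrix (Fin (p+1)) (Fin (p+1)) ℂ := S.submatrix ⇑ε.symm ⇑ε.symm with hSd
    set Sdi : Matrix (Fin (p+1)) (Fin (p+1)) ℂ := Sinv.submatrix ⇑ε.symm ⇑ε.symm with hSdi
    have hmulsub : ∀ A B : Matrix (Fin 1 ⊕ Fin p) (Fin 1 ⊕ Fin p) ℂ,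
        A.submatrix ⇑ε.symm ⇑ε.symm * B.submatrix ⇑ε.symm ⇑ε.symm
          = (A * B).submatrix ⇑ε.symm ⇑ε.symm := fun A B =>
      Matrix.submatrix_mul_equiv A B ⇑ε.symm ε.symm ⇑ε.symm
    have hSdSdi : Sd * Sdi = 1 := by rw [hSd, hSdi, hmulsub, hSS, Matrix.submatrix_one_equiv]
    have hSdiSd : Sdi * Sd = 1 := by rw [hSdi, hSd, hmulsub, hSS', Matrix.submatrix_one_equiv]
    have hM₂T : M₂ = Sd * T * Sdi := by
      rw [hSd, hT, hSdi, hmulsub, hmulsub, ← hNsim, hNdef]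
      ext x y
      simp [Matrix.submatrix_apply]
    -- triangularity of T
    have htri : ∀ i j : Fin (p+1), j < i → T i j = 0 := by
      intro x y hxy
      obtain ⟨a, rfl⟩ : ∃ a, x = ε a := ⟨ε.symm x, (ε.apply_symm_apply x).symm⟩
      obtain ⟨b, rfl⟩ : ∃ b, y = ε b := ⟨ε.symm y, (ε.apply_symm_apply y).symm⟩
      rw [hT]
      simp only [Matrix.submatrix_apply, Equiv.symm_apply_apply]
      match a, b with
      | Sum.inl a, _ =>
        exfalso
        rw [hεl a] at hxy
        exact Fin.not_lt_zero _ hxy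
      | Sum.inr a, Sum.inl b =>
        rw [hTsum]
        simp [Matrix.fromBlocks_apply₂₁]
      | Sum.inr a, Sum.inr b =>
        rw [hTsum]
        simp only [Matrix.fromBlocks_apply₂₂]
        apply hT'
        have h1 := hεr a
        have h2 := hεr b
        have := hxy
        rw [Fin.lt_def, h1, h2] at this
        exact Fin.lt_def.mpr (by omega)
    -- assemble
    refine ⟨T, P₀ * Pe * Sd, Sdi * Qe * ⅟P₀, ?_, ?_, ?_, htri⟩
    · calc P₀ * Pe * Sd * (Sdi * Qe * ⅟P₀)
          = P₀ * (Pe * (Sd * Sdi) * Qe) * ⅟P₀ := by noncomm_ring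
        _ = 1 := by rw [hSdSdi, Matrix.mul_one, hPeQe, Matrix.mul_one, mul_invOf_self]
    · calc Sdi * Qe * ⅟P₀ * (P₀ * Pe * Sd)
          = Sdi * (Qe * (⅟P₀ * P₀) * Pe) * Sd := by noncomm_ring
        _ = 1 := by rw [invOf_mul_self, Matrix.mul_one, hQePe, Matrix.mul_one, hSdiSd]
    · calc W = P₀ * M₁ * ⅟P₀ := by
            rw [hM₁]
            calc W = (P₀ * ⅟P₀) * W * (P₀ * ⅟P₀) := by rw [mul_invOf_self]; simp
              _ = P₀ * (⅟P₀ * W * P₀) * ⅟P₀ := by noncomm_ring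
        _ = P₀ * (Pe * (Sd * T * Sdi) * Qe) * ⅟P₀ := by rw [← hM₂T, ← hM₁M₂]
        _ = P₀ * Pe * Sd * T * (Sdi * Qe * ⅟P₀) := by noncomm_ring

theorem stmt4 (n p : ℕ) (X Y : Matrix (Fin n) (Fin n) ℂ)
    (W : Matrix (Fin p) (Fin p) ℂ) (z : ℂ) :
    ((1 : Matrix (Fin p) (Fin p) ℂ) ⊗ₖ X + W ⊗ₖ Y).charpoly.IsRoot z ↔
      ∃ μ : ℂ, W.charpoly.IsRoot μ ∧ (X + μ • Y).charpoly.IsRoot z := by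
  rcases Nat.eq_zero_or_pos n with hn | hn
  · subst hn
    have h1 : ∀ (M : Matrix (Fin p × Fin 0) (Fin p × Fin 0) ℂ), M.charpoly = 1 := by
      intro M; rw [Matrix.charpoly, Matrix.det_isEmpty]
    have h2 : ∀ (M : Matrix (Fin 0) (Fin 0) ℂ), M.charpoly = 1 := by
      intro M; rw [Matrix.charpoly, Matrix.det_isEmpty]
    simp [h1, h2, IsRoot]
  obtain ⟨T, P, Q, hPQ, hQP, hW, hT⟩ := exists_triangular p W
  haveI instP : Invertible P := ⟨Q, hQP, hPQ⟩
  have hQinv : ⅟P = Q := invOf_eq_right_inv hPQ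
  have hWT : W.charpoly = T.charpoly := by
    rw [hW, ← hQinv, charpoly_conj' P T]
  -- conjugate the big matrix
  have hbigconj : ((1 : Matrix (Fin p) (Fin p) ℂ) ⊗ₖ X + W ⊗ₖ Y)
      = (P ⊗ₖ (1 : Matrix (Fin n) (Fin n) ℂ))
        * ((1 : Matrix (Fin p) (Fin p) ℂ) ⊗ₖ X + T ⊗ₖ Y)
        * (Q ⊗ₖ (1 : Matrix (Fin n) (Fin n) ℂ)) := by
    rw [Matrix.mul_add, Matrix.add_mul, ← Matrix.mul_kronecker_mul, ← Matrix.mul_kronecker_mul,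
      ← Matrix.mul_kronecker_mul, ← Matrix.mul_kronecker_mul]
    rw [Matrix.one_mul, Matrix.mul_one, Matrix.one_mul, hPQ, Matrix.mul_one, ← hW,
      Matrix.mul_one]
  haveI instBig : Invertible (P ⊗ₖ (1 : Matrix (Fin n) (Fin n) ℂ)) :=
    ⟨Q ⊗ₖ (1 : Matrix (Fin n) (Fin n) ℂ),
      by rw [← Matrix.mul_kronecker_mul, hQP, Matrix.mul_one, Matrix.one_kronecker_one],
      by rw [← Matrix.mul_kronecker_mul, hPQ, Matrix.mul_one, Matrix.one_kronecker_one]⟩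
  have hQbig : ⅟(P ⊗ₖ (1 : Matrix (Fin n) (Fin n) ℂ)) = Q ⊗ₖ (1 : Matrix (Fin n) (Fin n) ℂ) :=
    invOf_eq_right_inv (by
      rw [← Matrix.mul_kronecker_mul, hPQ, Matrix.mul_one, Matrix.one_kronecker_one])
  have hbigcp : ((1 : Matrix (Fin p) (Fin p) ℂ) ⊗ₖ X + W ⊗ₖ Y).charpoly
      = ((1 : Matrix (Fin p) (Fin p) ℂ) ⊗ₖ X + T ⊗ₖ Y).charpoly := by
    rw [hbigconj, ← hQbig, charpoly_conj' _ _]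
  -- block triangular structure
  have hBT : ((1 : Matrix (Fin p) (Fin p) ℂ) ⊗ₖ X + T ⊗ₖ Y).BlockTriangular Prod.fst := by
    intro x y h
    have hne : x.1 ≠ y.1 := ne_of_gt h
    simp only [Matrix.add_apply, Matrix.kroneckerMap_apply, Matrix.one_apply,
      if_neg hne, hT _ _ h, zero_mul, add_zero]
  have hblock : ∀ a : Fin p,
      (((1 : Matrix (Fin p) (Fin p) ℂ) ⊗ₖ X + T ⊗ₖ Y).toSquareBlock Prod.fst a).charpoly
        = (X + T a a • Y).charpoly := by
    intro a
    let e : {x : Fin p × Fin n // x.1 = a} ≃ Fin n :=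
      { toFun := fun x => x.1.2
        invFun := fun k => ⟨(a, k), rfl⟩
        left_inv := fun x => by rcases x with ⟨⟨x1, x2⟩, hx⟩; cases hx; rfl
        right_inv := fun k => rfl }
    rw [← Matrix.charpoly_reindex e]
    congr 1
    ext k l
    show (((1 : Matrix (Fin p) (Fin p) ℂ) ⊗ₖ X + T ⊗ₖ Y).toSquareBlock Prod.fst a)
        ⟨(a, k), rfl⟩ ⟨(a, l), rfl⟩ = (X + T a a • Y) k l
    rw [Matrix.toSquareBlock_def]
    simp [Matrix.one_apply, mul_comm]
  have hcp2 : ((1 : Matrix (Fin p) (Fin p) ℂ) ⊗ₖ X + T ⊗ₖ Y).charpoly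
      = ∏ a ∈ Finset.image (Prod.fst : Fin p × Fin n → Fin p) Finset.univ,
          (((1 : Matrix (Fin p) (Fin p) ℂ) ⊗ₖ X + T ⊗ₖ Y).toSquareBlock Prod.fst a).charpoly := by
    rw [hBT.charpoly]
  rw [hbigcp, hcp2]
  simp only [hblock]
  have hroots : ∀ μ : ℂ, W.charpoly.IsRoot μ ↔ ∃ k : Fin p, T k k = μ := by
    intro μ
    rw [hWT, charpoly_of_upperTriangular T hT]
    simp only [IsRoot, eval_prod, eval_sub, eval_X, eval_C]
    rw [Finset.prod_eq_zero_iff]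
    constructor
    · rintro ⟨k, -, hk⟩; exact ⟨k, by linear_combination -hk⟩
    · rintro ⟨k, hk⟩; exact ⟨k, Finset.mem_univ _, by linear_combination -hk⟩
  simp only [IsRoot, eval_prod]
  rw [Finset.prod_eq_zero_iff]
  constructor
  · rintro ⟨a, ha, haz⟩
    exact ⟨T a a, (hroots _).mpr ⟨a, rfl⟩, haz⟩
  · rintro ⟨μ, hμ, hz⟩
    obtain ⟨k, rfl⟩ := (hroots μ).mp hμ
    exact ⟨k, Finset.mem_image.mpr ⟨(k, ⟨0, hn⟩), Finset.mem_univ _, rfl⟩, hz⟩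
end

section
/- Let P(N),…,P(0) be the solution of the RDE and suppose Q_N − P(N−1) is positive definite. Then the closed-loop matrix A − B(R + BᵀP(1)B)⁻¹BᵀP(1)A is Schur stable, i.e., all of its (complex) eigenvalues have modulus strictly less than 1. -/
open Matrix Polynomial

section Aux

variable {n m : ℕ}

private lemma real_conjT (X : Matrix (Fin n) (Fin m) ℝ) : Xᴴ = Xᵀ :=
  conjTranspose_eq_transpose_of_trivial X

private lemma psd_tmul {X : Matrix (Fin n) (Fin n) ℝ} (hX : X.PosSemidef)
    (B : Matrix (Fin n) (Fin m) ℝ) : (Bᵀ * X * B).PosSemidef := by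
  have := hX.conjTranspose_mul_mul_same B
  rwa [real_conjT] at this

private lemma S_posdef (B : Matrix (Fin n) (Fin m) ℝ) {R : Matrix (Fin m) (Fin m) ℝ}
    (hR : R.PosDef) {X : Matrix (Fin n) (Fin n) ℝ} (hX : X.PosSemidef) :
    (R + Bᵀ * X * B).PosDef :=
  hR.add_posSemidef (psd_tmul hX B)

open scoped MatrixOrder in
private lemma M_det_unit (B : Matrix (Fin n) (Fin m) ℝ) {R : Matrix (Fin m) (Fin m) ℝ}
    (hR : R.PosDef) {X : Matrix (Fin n) (Fin n) ℝ} (hX : X.PosSemidef) :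
    IsUnit (1 + X * B * R⁻¹ * Bᵀ).det := by
  have hC : (B * R⁻¹ * Bᵀ).PosSemidef := by
    have := (hR.inv).posSemidef.mul_mul_conjTranspose_same B
    rwa [real_conjT] at this
  set D := CFC.sqrt (B * R⁻¹ * Bᵀ) with hDdef
  have hD : D * D = B * R⁻¹ * Bᵀ := CFC.sqrt_mul_sqrt_self _ hC.nonneg
  have hDpsd : D.PosSemidef := (CFC.sqrt_nonneg _).posSemidef
  have hDh : Dᵀ = D := by rw [← real_conjT]; exact hDpsd.isHermitian
  have h1 : 1 + X * B * R⁻¹ * Bᵀ = 1 + (X * D) * D := by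
    rw [Matrix.mul_assoc X D D, hD, ← Matrix.mul_assoc, ← Matrix.mul_assoc]
  have h2 : (1 + (X * D) * D).det = (1 + D * (X * D)).det := by
    rw [add_comm, add_comm (1 : Matrix (Fin n) (Fin n) ℝ), ← Matrix.det_mul_add_one_comm]
  have h3 : (1 + D * (X * D)).PosDef := by
    have : (Dᵀ * X * D).PosSemidef := psd_tmul hX D
    rw [hDh] at this
    have := Matrix.PosDef.add_posSemidef Matrix.PosDef.one this
    rwa [Matrix.mul_assoc] at this
  rw [h1, h2]
  exact h3.det_pos.ne'.isUnit

private lemma woodbury_aux (X : Matrix (Fin n) (Fin n) ℝ) (B : Matrix (Fin n) (Fin m) ℝ)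
    (R S Ri Si : Matrix (Fin m) (Fin m) ℝ)
    (hRRi : Ri * R = 1) (hSSi' : S * Si = 1)
    (hS : S = R + Bᵀ * X * B) :
    (1 + X * B * Ri * Bᵀ) * (X - X * B * Si * (Bᵀ * X)) = X := by
  have hT : Bᵀ * X * B = S - R := by rw [hS, add_sub_cancel_left]
  have key : X * B * Ri * (Bᵀ * X * B) * Si = X * B * Ri - X * B * Si := by
    rw [hT, Matrix.mul_sub, Matrix.sub_mul, Matrix.mul_assoc (X * B * Ri) S Si, hSSi',
      Matrix.mul_one, Matrix.mul_assoc (X * B) Ri R, hRRi, Matrix.mul_one]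
  have hab : (X * B * Ri * Bᵀ) * (X * B * Si * (Bᵀ * X)) =
      (X * B * Ri * Bᵀ) * X - X * B * Si * (Bᵀ * X) := by
    calc (X * B * Ri * Bᵀ) * (X * B * Si * (Bᵀ * X))
        = (X * B * Ri * (Bᵀ * X * B) * Si) * (Bᵀ * X) := by
          simp only [Matrix.mul_assoc]
      _ = (X * B * Ri - X * B * Si) * (Bᵀ * X) := by rw [key]
      _ = (X * B * Ri * Bᵀ) * X - X * B * Si * (Bᵀ * X) := by
          rw [Matrix.sub_mul, ← Matrix.mul_assoc (X * B * Ri) Bᵀ X]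
  calc (1 + X * B * Ri * Bᵀ) * (X - X * B * Si * (Bᵀ * X))
      = X - X * B * Si * (Bᵀ * X) + ((X * B * Ri * Bᵀ) * X
          - (X * B * Ri * Bᵀ) * (X * B * Si * (Bᵀ * X))) := by
        rw [Matrix.add_mul, Matrix.one_mul, Matrix.mul_sub]
    _ = X := by rw [hab]; abel

variable (A : Matrix (Fin n) (Fin n) ℝ) (B : Matrix (Fin n) (Fin m) ℝ)
  (Q : Matrix (Fin n) (Fin n) ℝ) (R : Matrix (Fin m) (Fin m) ℝ)

/-- gain matrix -/
noncomputable def ricK (X : Matrix (Fin n) (Fin n) ℝ) : Matrix (Fin m) (Fin n) ℝ :=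
  (R + Bᵀ * X * B)⁻¹ * Bᵀ * X * A

/-- Riccati map -/
noncomputable def ricF (X : Matrix (Fin n) (Fin n) ℝ) : Matrix (Fin n) (Fin n) ℝ :=
  Aᵀ * (1 + X * B * R⁻¹ * Bᵀ)⁻¹ * X * A + Q

/-- cost of a gain -/
noncomputable def ricG (X : Matrix (Fin n) (Fin n) ℝ) (L : Matrix (Fin m) (Fin n) ℝ) :
    Matrix (Fin n) (Fin n) ℝ :=
  (A - B * L)ᵀ * X * (A - B * L) + Lᵀ * R * L + Q

variable {R}

section Facts

variable (hR : R.PosDef) {X : Matrix (Fin n) (Fin n) ℝ} (hX : X.PosSemidef)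
include hR hX

private lemma S_key : (R + Bᵀ * X * B) * ricK A B R X = Bᵀ * (X * A) := by
  have hs := S_posdef B hR hX
  rw [ricK, ← Matrix.mul_assoc, ← Matrix.mul_assoc,
    Matrix.mul_nonsing_inv_cancel_left _ _ hs.det_pos.ne'.isUnit, Matrix.mul_assoc]

private lemma S_symm : (R + Bᵀ * X * B)ᵀ = R + Bᵀ * X * B := by
  have h1 : Rᵀ = R := by rw [← real_conjT]; exact hR.isHermitian
  have h2 : Xᵀ = X := by rw [← real_conjT]; exact hX.isHermitian
  rw [transpose_add, h1, transpose_mul, transpose_mul, transpose_transpose, h2,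
    Matrix.mul_assoc]

private lemma S_key' : (ricK A B R X)ᵀ * (R + Bᵀ * X * B) = Aᵀ * (X * B) := by
  have h2 : Xᵀ = X := by rw [← real_conjT]; exact hX.isHermitian
  have := congrArg Matrix.transpose (S_key A B hR hX)
  rw [transpose_mul, S_symm B hR hX, transpose_mul, transpose_mul, transpose_transpose,
    h2] at this
  rw [this, Matrix.mul_assoc]

/-- The Riccati map in completed-square form. -/
private lemma ricF_eq : ricF A B Q R X = ricG A B Q R X (ricK A B R X) := by
  have hXs : Xᵀ = X := by rw [← real_conjT]; exact hX.isHermitian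
  set S := R + Bᵀ * X * B with hSdef
  have hs := S_posdef B hR hX
  set K := ricK A B R X with hKdef
  have hSu : IsUnit S.det := hs.det_pos.ne'.isUnit
  have hRu : IsUnit R.det := hR.det_pos.ne'.isUnit
  have hW : (1 + X * B * R⁻¹ * Bᵀ)⁻¹ * X = X - X * B * S⁻¹ * (Bᵀ * X) := by
    have hMu := M_det_unit B hR hX
    have := woodbury_aux X B R S R⁻¹ S⁻¹ (Matrix.nonsing_inv_mul R hRu)
      (Matrix.mul_nonsing_inv S hSu) hSdef
    calc (1 + X * B * R⁻¹ * Bᵀ)⁻¹ * X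
        = (1 + X * B * R⁻¹ * Bᵀ)⁻¹ * ((1 + X * B * R⁻¹ * Bᵀ) *
            (X - X * B * S⁻¹ * (Bᵀ * X))) := by rw [Matrix.mul_assoc X B S⁻¹] at this ⊢; rw [this]
      _ = X - X * B * S⁻¹ * (Bᵀ * X) := Matrix.nonsing_inv_mul_cancel_left _ _ hMu
  -- key right-assoc rewrites
  have hXA : Bᵀ * (X * A) = S * K := (S_key A B hR hX).symm
  have hAX : Aᵀ * (X * B) = Kᵀ * S := (S_key' A B hR hX).symm
  have hBXB : Bᵀ * (X * (B * K)) = S * K - R * K := by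
    have : Bᵀ * X * B = S - R := by rw [hSdef, add_sub_cancel_left]
    calc Bᵀ * (X * (B * K)) = (Bᵀ * X * B) * K := by simp only [Matrix.mul_assoc]
      _ = S * K - R * K := by rw [this, Matrix.sub_mul]
  have hK' : K = S⁻¹ * (Bᵀ * (X * A)) := by
    rw [hKdef, ricK, Matrix.mul_assoc, Matrix.mul_assoc]
  -- expand both sides
  rw [ricF, ricG, Matrix.mul_assoc Aᵀ (1 + X * B * R⁻¹ * Bᵀ)⁻¹ X, hW]
  simp only [Matrix.transpose_sub, Matrix.transpose_mul, Matrix.sub_mul, Matrix.mul_sub,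
    Matrix.mul_assoc]
  rw [← hK', hXA, hBXB, Matrix.mul_sub]
  abel

/-- Completion of squares: any gain `L` costs at least the optimal gain. -/
private lemma ricG_decomp (L : Matrix (Fin m) (Fin n) ℝ) :
    ricG A B Q R X L = ricG A B Q R X (ricK A B R X)
      + (L - ricK A B R X)ᵀ * (R + Bᵀ * X * B) * (L - ricK A B R X) := by
  set S := R + Bᵀ * X * B with hSdef
  set K := ricK A B R X with hKdef
  have hXA : Bᵀ * (X * A) = S * K := (S_key A B hR hX).symm
  have hAX : Aᵀ * (X * B) = Kᵀ * S := (S_key' A B hR hX).symm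
  have hAXW : ∀ W : Matrix (Fin m) (Fin n) ℝ, Aᵀ * (X * (B * W)) = Kᵀ * (S * W) := by
    intro W
    calc Aᵀ * (X * (B * W)) = (Aᵀ * (X * B)) * W := by simp only [Matrix.mul_assoc]
      _ = Kᵀ * (S * W) := by rw [hAX, Matrix.mul_assoc]
  have hBXW : ∀ W : Matrix (Fin m) (Fin n) ℝ, Bᵀ * (X * (B * W)) = S * W - R * W := by
    intro W
    have h : Bᵀ * X * B = S - R := by rw [hSdef, add_sub_cancel_left]
    calc Bᵀ * (X * (B * W)) = (Bᵀ * X * B) * W := by simp only [Matrix.mul_assoc]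
      _ = S * W - R * W := by rw [h, Matrix.sub_mul]
  rw [ricG, ricG]
  simp only [Matrix.transpose_sub, Matrix.transpose_mul, Matrix.sub_mul, Matrix.mul_sub,
    Matrix.mul_assoc]
  simp only [hAXW, hBXW, hXA, Matrix.mul_sub]
  abel

private lemma ricG_gain_psd (L : Matrix (Fin m) (Fin n) ℝ) :
    (ricG A B Q R X L - ricG A B Q R X (ricK A B R X)).PosSemidef := by
  rw [ricG_decomp A B Q hR hX L, add_sub_cancel_left]
  exact psd_tmul (S_posdef B hR hX).posSemidef _

private lemma ricF_posdef (hQ : Q.PosDef) : (ricF A B Q R X).PosDef := by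
  rw [ricF_eq A B Q hR hX, ricG]
  exact Matrix.PosDef.posSemidef_add ((psd_tmul hX _).add (psd_tmul hR.posSemidef _)) hQ

end Facts

private lemma ricG_state_mono (hR : R.PosDef) {X Y : Matrix (Fin n) (Fin n) ℝ}
    (hYX : (Y - X).PosSemidef) (L : Matrix (Fin m) (Fin n) ℝ) :
    (ricG A B Q R Y L - ricG A B Q R X L).PosSemidef := by
  have h : ricG A B Q R Y L - ricG A B Q R X L
      = (A - B * L)ᵀ * (Y - X) * (A - B * L) := by
    rw [ricG, ricG]
    simp only [Matrix.mul_sub, Matrix.sub_mul]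
    abel
  rw [h]
  exact psd_tmul hYX _

/-- Monotonicity of the Riccati map. -/
private lemma ricF_mono (hR : R.PosDef) {X Y : Matrix (Fin n) (Fin n) ℝ}
    (hX : X.PosSemidef) (hY : Y.PosSemidef) (hYX : (Y - X).PosSemidef) :
    (ricF A B Q R Y - ricF A B Q R X).PosSemidef := by
  have p1 : (ricG A B Q R X (ricK A B R Y) - ricG A B Q R X (ricK A B R X)).PosSemidef :=
    ricG_gain_psd A B Q hR hX _
  have p2 : (ricG A B Q R Y (ricK A B R Y) - ricG A B Q R X (ricK A B R Y)).PosSemidef :=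
    ricG_state_mono A B Q hR hYX _
  have h : ricF A B Q R Y - ricF A B Q R X
      = (ricG A B Q R Y (ricK A B R Y) - ricG A B Q R X (ricK A B R Y))
        + (ricG A B Q R X (ricK A B R Y) - ricG A B Q R X (ricK A B R X)) := by
    rw [ricF_eq A B Q hR hX, ricF_eq A B Q hR hY]
    abel
  rw [h]
  exact p2.add p1

/-- real part of a complex quadratic form of a real matrix -/
private lemma quad_re (X : Matrix (Fin n) (Fin n) ℝ) (v : Fin n → ℂ) :
    (star v ⬝ᵥ ((X.map Complex.ofReal) *ᵥ v)).re
      = (fun i => (v i).re) ⬝ᵥ (X *ᵥ fun i => (v i).re)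
        + (fun i => (v i).im) ⬝ᵥ (X *ᵥ fun i => (v i).im) := by
  simp only [dotProduct, mulVec, Matrix.map_apply, Pi.star_apply]
  rw [Complex.re_sum, ← Finset.sum_add_distrib]
  refine Finset.sum_congr rfl fun i _ => ?_
  simp only [Complex.mul_re, Complex.mul_im, RCLike.star_def, Complex.conj_re, Complex.conj_im,
    Complex.re_sum, Complex.im_sum, Complex.ofReal_re, Complex.ofReal_im,
    Finset.mul_sum]
  rw [← Finset.sum_add_distrib]
  refine Finset.sum_congr rfl fun j _ => ?_
  ring

private lemma quad_pos {X : Matrix (Fin n) (Fin n) ℝ} (hX : X.PosDef) {v : Fin n → ℂ}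
    (hv : v ≠ 0) : 0 < (star v ⬝ᵥ ((X.map Complex.ofReal) *ᵥ v)).re := by
  rw [quad_re]
  set a : Fin n → ℝ := fun i => (v i).re with ha
  set b : Fin n → ℝ := fun i => (v i).im with hb
  have hstar : ∀ w : Fin n → ℝ, star w = w := fun w => funext fun i => by simp
  have hab : a ≠ 0 ∨ b ≠ 0 := by
    by_contra h
    push_neg at h
    apply hv
    funext i
    have h1 := congrFun h.1 i
    have h2 := congrFun h.2 i
    simp only [ha, hb, Pi.zero_apply] at h1 h2
    exact Complex.ext h1 h2
  rcases hab with h | h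
  · have := hX.dotProduct_mulVec_pos (x := a) (by exact h)
    rw [hstar] at this
    have h2 := hX.posSemidef.dotProduct_mulVec_nonneg b
    rw [hstar] at h2
    linarith
  · have := hX.dotProduct_mulVec_pos (x := b) (by exact h)
    rw [hstar] at this
    have h2 := hX.posSemidef.dotProduct_mulVec_nonneg a
    rw [hstar] at h2
    linarith

private lemma map_transpose' (Y : Matrix (Fin n) (Fin n) ℝ) :
    (Yᵀ).map Complex.ofReal = ((Y.map Complex.ofReal))ᴴ := by
  ext i j
  simp [Matrix.conjTranspose_apply, Matrix.map_apply, Complex.conj_ofReal]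

private lemma map_mul' (Y Z : Matrix (Fin n) (Fin n) ℝ) :
    (Y * Z).map Complex.ofReal = (Y.map Complex.ofReal) * (Z.map Complex.ofReal) := by
  ext i j
  simp [Matrix.mul_apply, Matrix.map_apply]

private lemma schur_of_lyap (Acl P1 : Matrix (Fin n) (Fin n) ℝ) (hP1 : P1.PosDef)
    (hL : (P1 - Aclᵀ * P1 * Acl).PosDef) :
    ∀ z : ℂ, ((Acl.map Complex.ofReal).charpoly).IsRoot z → ‖z‖ < 1 := by
  intro z hz
  set Mc : Matrix (Fin n) (Fin n) ℂ := Acl.map Complex.ofReal with hMc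
  -- from the root of the charpoly, get an eigenvector
  have hdet : (Matrix.scalar (Fin n) z - Mc).det = 0 := by
    have : Polynomial.eval z Mc.charpoly = 0 := hz
    rwa [Matrix.charpoly, eval_det, matPolyEquiv_charmatrix, Polynomial.eval_sub,
      Polynomial.eval_X, Polynomial.eval_C] at this
  obtain ⟨v, hv0, hv⟩ := Matrix.exists_mulVec_eq_zero_iff.mpr hdet
  have hev : Mc *ᵥ v = z • v := by
    have h1 : (Matrix.scalar (Fin n) z) *ᵥ v = z • v := by
      rw [Matrix.scalar_apply, ← Matrix.smul_one_eq_diagonal, Matrix.smul_mulVec,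
        Matrix.one_mulVec]
    have := hv
    rw [Matrix.sub_mulVec, sub_eq_zero, h1] at this
    exact this.symm
  set P1c : Matrix (Fin n) (Fin n) ℂ := P1.map Complex.ofReal with hP1c
  have q2eq : star v ⬝ᵥ (((Aclᵀ * P1 * Acl).map Complex.ofReal) *ᵥ v)
      = (Complex.normSq z : ℂ) * (star v ⬝ᵥ (P1c *ᵥ v)) := by
    have h1 : ((Aclᵀ * P1 * Acl).map Complex.ofReal) = Mcᴴ * (P1c * Mc) := by
      rw [map_mul', map_mul', map_transpose', Matrix.mul_assoc]
    rw [h1, ← Matrix.mulVec_mulVec, Matrix.dotProduct_mulVec, ← Matrix.star_mulVec,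
      hev, ← Matrix.mulVec_mulVec, hev, Matrix.mulVec_smul, star_smul, smul_dotProduct,
      dotProduct_smul]
    simp only [smul_eq_mul, RCLike.star_def, ← mul_assoc]
    rw [Complex.normSq_eq_conj_mul_self]
  have hq1 : 0 < (star v ⬝ᵥ (P1c *ᵥ v)).re := quad_pos hP1 hv0
  have hq3 : 0 < (star v ⬝ᵥ (((P1 - Aclᵀ * P1 * Acl).map Complex.ofReal) *ᵥ v)).re :=
    quad_pos hL hv0
  have hmap : ((P1 - Aclᵀ * P1 * Acl).map Complex.ofReal)
      = P1c - (Aclᵀ * P1 * Acl).map Complex.ofReal := by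
    ext i j
    simp [hP1c, Matrix.map_apply, Matrix.sub_apply]
  rw [hmap, Matrix.sub_mulVec, dotProduct_sub, q2eq] at hq3
  rw [Complex.sub_re, Complex.mul_re, Complex.ofReal_re, Complex.ofReal_im] at hq3
  have hlt : Complex.normSq z < 1 := by nlinarith
  rw [← Complex.sq_norm] at hlt
  nlinarith [norm_nonneg z]

end Aux

theorem stmt8 (n m N : ℕ) (hN : 1 ≤ N)
    (A : Matrix (Fin n) (Fin n) ℝ) (B : Matrix (Fin n) (Fin m) ℝ)
    (Q QN : Matrix (Fin n) (Fin n) ℝ) (R : Matrix (Fin m) (Fin m) ℝ)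
    (hQ : Q.PosDef) (hQN : QN.PosDef) (hR : R.PosDef)
    (P : ℕ → Matrix (Fin n) (Fin n) ℝ)
    (hPN : P N = QN)
    (hPrec : ∀ k < N,
      P k = Aᵀ * (1 + P (k + 1) * B * R⁻¹ * Bᵀ)⁻¹ * P (k + 1) * A + Q)
    (hmono : (QN - P (N - 1)).PosDef) :
    ∀ z : ℂ,
      ((A - B * ((R + Bᵀ * P 1 * B)⁻¹ * Bᵀ * P 1 * A)).map
          Complex.ofReal).charpoly.IsRoot z →
        ‖z‖ < 1 := by
  intro z hz
  have hPsd : ∀ j, j ≤ N → (P (N - j)).PosDef := by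
    intro j
    induction j with
    | zero => intro _; simpa [hPN] using hQN
    | succ j ih =>
      intro hj
      have heq := hPrec (N - (j + 1)) (by omega)
      rw [show N - (j + 1) + 1 = N - j from by omega] at heq
      rw [heq]
      exact ricF_posdef A B Q hR (ih (by omega)).posSemidef hQ
  have hPk : ∀ k, k ≤ N → (P k).PosDef := fun k hk => by
    have := hPsd (N - k) (by omega)
    rwa [show N - (N - k) = k from by omega] at this
  have hMono : ∀ j, j + 1 ≤ N → (P (N - j) - P (N - j - 1)).PosSemidef := by
    intro j
    induction j with
    | zero => intro _; simpa [hPN] using hmono.posSemidef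
    | succ j ih =>
      intro hj
      have h1 : N - (j + 1) = N - j - 1 := by omega
      rw [h1]
      have e1 : P (N - j - 1) = ricF A B Q R (P (N - j)) := by
        have := hPrec (N - j - 1) (by omega)
        rwa [show N - j - 1 + 1 = N - j from by omega] at this
      have e2 : P (N - j - 1 - 1) = ricF A B Q R (P (N - j - 1)) := by
        have := hPrec (N - j - 1 - 1) (by omega)
        rwa [show N - j - 1 - 1 + 1 = N - j - 1 from by omega] at this
      rw [e1, e2]
      exact ricF_mono A B Q hR (hPk (N - j - 1) (by omega)).posSemidef
        (hPk (N - j) (by omega)).posSemidef (ih (by omega))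
  have h10 : (P 1 - P 0).PosSemidef := by
    have := hMono (N - 1) (by omega)
    rwa [show N - (N - 1) = 1 from by omega, show (1 : ℕ) - 1 = 0 from rfl] at this
  have hP1 : (P 1).PosDef := hPk 1 hN
  have hP0eq : P 0 = ricF A B Q R (P 1) := by
    have h := hPrec 0 (by omega)
    norm_num at h
    rw [ricF]
    exact h
  have e : ricF A B Q R (P 1) = (A - B * ricK A B R (P 1))ᵀ * (P 1)
      * (A - B * ricK A B R (P 1)) + (ricK A B R (P 1))ᵀ * R * (ricK A B R (P 1)) + Q :=
    ricF_eq A B Q hR hP1.posSemidef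
  have hlyap : ((P 1) - (A - B * ricK A B R (P 1))ᵀ * (P 1)
      * (A - B * ricK A B R (P 1))).PosDef := by
    have hsum : (P 1) - (A - B * ricK A B R (P 1))ᵀ * (P 1) * (A - B * ricK A B R (P 1))
        = (P 1 - P 0) + (ricK A B R (P 1))ᵀ * R * (ricK A B R (P 1)) + Q := by
      rw [hP0eq, e]; abel
    rw [hsum]
    exact Matrix.PosDef.posSemidef_add (h10.add (psd_tmul hR.posSemidef _)) hQ
  have hAcl : A - B * ((R + Bᵀ * P 1 * B)⁻¹ * Bᵀ * P 1 * A) = A - B * ricK A B R (P 1) := rfl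
  rw [hAcl] at hz
  exact schur_of_lyap (A - B * ricK A B R (P 1)) (P 1) hP1 hlyap z hz
end
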